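/- arXiv:1804.05740 — 6 statements merged into one kernel-verified Lean document; each statement's English description precedes it below -/
import Mathlib

section
/- The Poisson transform P, mapping a finite signed measure μ on [0,∞) to the sequence k ↦ ∫_0^∞ (x^k/k!) e^{-x} dμ(x), is injective: if Pμ = 0 then μ = 0. -/
open MeasureTheory
open scoped ENNReal NNReal


lemma pt_exp_tsum (y : ℝ) : Real.exp y = ∑' n : ℕ, y ^ n / (Nat.factorial n) := by
  rw [Real.exp_eq_exp_ℝ, NormedSpace.exp_eq_tsum_div]

lemma pt_ae_nonneg (μ : Measure ℝ) (hμ : μ (Set.Iio 0) = 0) : ∀ᵐ x ∂μ, 0 ≤ x := by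
  rw [ae_iff]
  convert hμ using 2
  ext x
  simp [not_le, Set.mem_Iio]

lemma pt_alg (t x E : ℝ) (k j : ℕ) :
    (t ^ j * ((k + j).choose j : ℝ)) * (x ^ (k + j) / ((k + j).factorial) * E)
      = (x ^ k / (Nat.factorial k) * E) * ((t * x) ^ j / (Nat.factorial j)) := by
  have hfac : (((k + j).choose j : ℝ)) * (Nat.factorial k) * (Nat.factorial j)
      = ((k + j).factorial : ℝ) := by
    exact_mod_cast congrArg (Nat.cast (R := ℝ)) (Nat.add_choose_mul_factorial_mul_factorial k j)
  have h1 : (Nat.factorial k : ℝ) ≠ 0 := Nat.cast_ne_zero.2 (Nat.factorial_ne_zero k)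
  have h2 : (Nat.factorial j : ℝ) ≠ 0 := Nat.cast_ne_zero.2 (Nat.factorial_ne_zero j)
  have h3 : ((k + j).factorial : ℝ) ≠ 0 := Nat.cast_ne_zero.2 (Nat.factorial_ne_zero _)
  field_simp
  rw [pow_add, mul_pow]
  linear_combination (x ^ k * x ^ j * E * t ^ j) * hfac

lemma pt_bound {a : ℝ} (ha : 0 < a) (k : ℕ) {y : ℝ} (hy : 0 ≤ y) :
    y ^ k * Real.exp (-(a * y)) ≤ (Nat.factorial k) / a ^ k := by
  have hay : 0 ≤ a * y := mul_nonneg ha.le hy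
  have h1 : (a * y) ^ k / (Nat.factorial k) ≤ Real.exp (a * y) := by
    calc (a * y) ^ k / (Nat.factorial k)
        ≤ ∑ i ∈ Finset.range (k + 1), (a * y) ^ i / (Nat.factorial i) := by
          refine Finset.single_le_sum (f := fun i => (a * y) ^ i / (Nat.factorial i)) ?_ ?_
          · intro i _
            positivity
          · exact Finset.self_mem_range_succ k
      _ ≤ Real.exp (a * y) := Real.sum_le_exp_of_nonneg hay _
  rw [le_div_iff₀ (by positivity), Real.exp_neg]
  have hx := Real.exp_pos (a * y)
  rw [div_le_iff₀ (by positivity)] at h1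
  calc y ^ k * (Real.exp (a * y))⁻¹ * a ^ k
      = (a * y) ^ k * (Real.exp (a * y))⁻¹ := by rw [mul_pow]; ring
    _ ≤ (Real.exp (a * y) * Nat.factorial k) * (Real.exp (a * y))⁻¹ := by gcongr
    _ = Nat.factorial k := by field_simp

lemma pt_key (μ : Measure ℝ) [IsFiniteMeasure μ] (hμ : μ (Set.Iio 0) = 0)
    (c s : ℝ) (k : ℕ) (M : ℝ)
    (hb : ∀ y : ℝ, 0 ≤ y → y ^ k * Real.exp ((|s| - c) * y) ≤ M) :
    ∫ x, x ^ k / (Nat.factorial k) * Real.exp (-((c + s) * x)) ∂μ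
      = ∑' j : ℕ, ((-s) ^ j * ((k + j).choose j : ℝ)) *
          ∫ x, x ^ (k + j) / ((k + j).factorial : ℝ) * Real.exp (-(c * x)) ∂μ := by
  set f : ℕ → ℝ → ℝ := fun j x =>
    ((-s) ^ j * ((k + j).choose j : ℝ)) *
      (x ^ (k + j) / ((k + j).factorial : ℝ) * Real.exp (-(c * x))) with hf
  have hcont : ∀ j, Continuous (f j) := by
    intro j
    fun_prop
  have hptsum : ∀ x : ℝ,
      ∑' j, f j x = x ^ k / (Nat.factorial k) * Real.exp (-((c + s) * x)) := by
    intro x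
    have e : ∀ j, f j x = (x ^ k / (Nat.factorial k) * Real.exp (-(c * x)))
        * ((-s * x) ^ j / (Nat.factorial j)) := fun j => pt_alg (-s) x _ k j
    rw [tsum_congr e, tsum_mul_left, ← pt_exp_tsum (-s * x), mul_assoc, ← Real.exp_add]
    have : -(c * x) + -s * x = -((c + s) * x) := by ring
    rw [this]
  have hnorm : ∀ x : ℝ, 0 ≤ x → ∀ j, ‖f j x‖
      = (x ^ k / (Nat.factorial k) * Real.exp (-(c * x)))
        * ((|s| * x) ^ j / (Nat.factorial j)) := by
    intro x hx j
    rw [← pt_alg (|s|) x _ k j, hf]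
    have h4 : 0 ≤ x ^ (k + j) / ((k + j).factorial : ℝ) :=
      div_nonneg (pow_nonneg hx _) (Nat.cast_nonneg _)
    simp only [Real.norm_eq_abs, abs_mul, abs_pow, abs_neg, Nat.abs_cast,
      abs_of_nonneg h4, abs_of_nonneg (Real.exp_pos (-(c * x))).le]
  have hsummable : ∀ x : ℝ, 0 ≤ x → Summable (fun j => ‖f j x‖) := by
    intro x hx
    have := (Real.summable_pow_div_factorial (|s| * x)).mul_left
      (x ^ k / (Nat.factorial k) * Real.exp (-(c * x)))
    exact this.congr (fun j => (hnorm x hx j).symm)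
  have htsumnorm : ∀ x : ℝ, 0 ≤ x →
      ∑' j, ‖f j x‖ = x ^ k * Real.exp ((|s| - c) * x) / (Nat.factorial k) := by
    intro x hx
    rw [tsum_congr (hnorm x hx), tsum_mul_left, ← pt_exp_tsum (|s| * x), mul_assoc,
      ← Real.exp_add]
    have : -(c * x) + |s| * x = (|s| - c) * x := by ring
    rw [this]
    ring
  have hf' : ∑' j, ∫⁻ x, ‖f j x‖₊ ∂μ ≠ ⊤ := by
    rw [← lintegral_tsum (fun j => ((hcont j).measurable.nnnorm.coe_nnreal_ennreal).aemeasurable)]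
    have hae : ∀ᵐ x ∂μ, (∑' j, (‖f j x‖₊ : ℝ≥0∞)) ≤ ENNReal.ofReal (M / (Nat.factorial k)) := by
      filter_upwards [pt_ae_nonneg μ hμ] with x hx
      have h1 : ∑' j, (‖f j x‖₊ : ℝ≥0∞) = ENNReal.ofReal (∑' j, ‖f j x‖) := by
        rw [ENNReal.ofReal_tsum_of_nonneg (fun j => norm_nonneg _) (hsummable x hx)]
        simp only [← enorm_eq_nnnorm, ← ofReal_norm, Real.norm_eq_abs]
      rw [h1, htsumnorm x hx]
      apply ENNReal.ofReal_le_ofReal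
      gcongr
      exact hb x hx
    refine ne_of_lt (lt_of_le_of_lt (lintegral_mono_ae hae) ?_)
    rw [lintegral_const]
    exact ENNReal.mul_lt_top ENNReal.ofReal_lt_top (measure_lt_top μ _)
  calc ∫ x, x ^ k / (Nat.factorial k) * Real.exp (-((c + s) * x)) ∂μ
      = ∫ x, ∑' j, f j x ∂μ :=
        integral_congr_ae (Filter.Eventually.of_forall (fun x => (hptsum x).symm))
    _ = ∑' j, ∫ x, f j x ∂μ :=
        integral_tsum (fun j => (hcont j).aestronglyMeasurable) hf'
    _ = ∑' j : ℕ, ((-s) ^ j * ((k + j).choose j : ℝ)) *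
          ∫ x, x ^ (k + j) / ((k + j).factorial : ℝ) * Real.exp (-(c * x)) ∂μ := by
        exact tsum_congr (fun j => integral_const_mul _ _)

section
variable {μp μn : Measure ℝ} [IsFiniteMeasure μp] [IsFiniteMeasure μn]

lemma pt_step (hp : μp (Set.Iio 0) = 0) (hn : μn (Set.Iio 0) = 0) {c : ℝ} (hc : 0 < c)
    (hQ : ∀ k : ℕ, ∫ x, x ^ k / (Nat.factorial k) * Real.exp (-(c * x)) ∂μp
      = ∫ x, x ^ k / (Nat.factorial k) * Real.exp (-(c * x)) ∂μn) :
    ∀ k : ℕ, ∫ x, x ^ k / (Nat.factorial k) * Real.exp (-((c + c / 2) * x)) ∂μp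
      = ∫ x, x ^ k / (Nat.factorial k) * Real.exp (-((c + c / 2) * x)) ∂μn := by
  intro k
  have hc2 : (0:ℝ) < c / 2 := by linarith
  have hb : ∀ y : ℝ, 0 ≤ y →
      y ^ k * Real.exp ((|c / 2| - c) * y) ≤ (Nat.factorial k) / (c / 2) ^ k := by
    intro y hy
    have harg : (|c / 2| - c) * y = -(c / 2 * y) := by
      rw [abs_of_pos hc2]; ring
    rw [harg]
    exact pt_bound hc2 k hy
  rw [pt_key μp hp c (c / 2) k _ hb, pt_key μn hn c (c / 2) k _ hb]
  exact tsum_congr fun j => by rw [hQ (k + j)]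

lemma pt_iter (hp : μp (Set.Iio 0) = 0) (hn : μn (Set.Iio 0) = 0)
    (h : ∀ k : ℕ,
      (∫ x, x ^ k / (Nat.factorial k) * Real.exp (-x) ∂μp)
        = ∫ x, x ^ k / (Nat.factorial k) * Real.exp (-x) ∂μn) :
    ∀ m : ℕ, ∀ k : ℕ,
      ∫ x, x ^ k / (Nat.factorial k) * Real.exp (-(((3/2 : ℝ)) ^ m * x)) ∂μp
        = ∫ x, x ^ k / (Nat.factorial k) * Real.exp (-(((3/2 : ℝ)) ^ m * x)) ∂μn := by
  intro m
  induction m with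
  | zero => simpa only [pow_zero, one_mul] using h
  | succ m ih =>
    have hc : (0:ℝ) < (3/2 : ℝ) ^ m := by positivity
    have e : ((3/2 : ℝ)) ^ (m + 1) = (3/2 : ℝ) ^ m + (3/2 : ℝ) ^ m / 2 := by ring
    simpa only [e] using pt_step hp hn hc ih

lemma pt_laplace (hp : μp (Set.Iio 0) = 0) (hn : μn (Set.Iio 0) = 0)
    (h : ∀ k : ℕ,
      (∫ x, x ^ k / (Nat.factorial k) * Real.exp (-x) ∂μp)
        = ∫ x, x ^ k / (Nat.factorial k) * Real.exp (-x) ∂μn) :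
    ∀ n : ℕ, ∫ x, Real.exp (-((n : ℝ) * x)) ∂μp = ∫ x, Real.exp (-((n : ℝ) * x)) ∂μn := by
  intro n
  rcases Nat.eq_zero_or_pos n with hn0 | hn1
  · subst hn0
    have hb : ∀ y : ℝ, 0 ≤ y → y ^ 0 * Real.exp ((|(-1 : ℝ)| - 1) * y) ≤ 1 := by
      intro y hy
      simp
    have e1 := pt_key μp hp 1 (-1) 0 1 hb
    have e2 := pt_key μn hn 1 (-1) 0 1 hb
    have key : ∫ x, x ^ 0 / ((Nat.factorial 0 : ℕ) : ℝ) * Real.exp (-((1 + (-1 : ℝ)) * x)) ∂μp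
        = ∫ x, x ^ 0 / ((Nat.factorial 0 : ℕ) : ℝ) * Real.exp (-((1 + (-1 : ℝ)) * x)) ∂μn := by
      rw [e1, e2]
      refine tsum_congr fun j => ?_
      congr 1
      simpa only [zero_add, one_mul] using h j
    have harg : ∀ x : ℝ, ((0:ℕ):ℝ) * x = (1 + (-1 : ℝ)) * x := by intro x; norm_num
    simp only [harg]
    simpa only [pow_zero, Nat.factorial_zero, Nat.cast_one, div_one, one_mul] using key
  · obtain ⟨m, hm⟩ := pow_unbounded_of_one_lt (n : ℝ) (by norm_num : (1:ℝ) < 3/2)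
    set c : ℝ := (3/2 : ℝ) ^ m with hcdef
    have hb : ∀ y : ℝ, 0 ≤ y →
        y ^ 0 * Real.exp ((|(n : ℝ) - c| - c) * y) ≤ 1 := by
      intro y hy
      have habs : |(n : ℝ) - c| = c - (n : ℝ) := by
        rw [abs_of_nonpos (by linarith)]; ring
      rw [habs, pow_zero, one_mul]
      apply Real.exp_le_one_iff.mpr
      have hny : 0 ≤ (n : ℝ) * y := mul_nonneg (Nat.cast_nonneg n) hy
      nlinarith
    have e1 := pt_key μp hp c ((n : ℝ) - c) 0 1 hb
    have e2 := pt_key μn hn c ((n : ℝ) - c) 0 1 hb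
    have harg : c + ((n : ℝ) - c) = (n : ℝ) := by ring
    simp only [harg] at e1 e2
    have key : ∫ x, x ^ 0 / ((Nat.factorial 0 : ℕ) : ℝ) * Real.exp (-((n : ℝ) * x)) ∂μp
        = ∫ x, x ^ 0 / ((Nat.factorial 0 : ℕ) : ℝ) * Real.exp (-((n : ℝ) * x)) ∂μn := by
      rw [e1, e2]
      exact tsum_congr fun j => by rw [pt_iter hp hn h m (0 + j)]
    simpa only [pow_zero, Nat.factorial_zero, Nat.cast_one, div_one, one_mul] using key

lemma pt_expmom (hp : μp (Set.Iio 0) = 0) (hn : μn (Set.Iio 0) = 0)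
    (h : ∀ k : ℕ,
      (∫ x, x ^ k / (Nat.factorial k) * Real.exp (-x) ∂μp)
        = ∫ x, x ^ k / (Nat.factorial k) * Real.exp (-x) ∂μn) :
    ∀ n : ℕ, ∫ x, (Real.exp (-x)) ^ n ∂μp = ∫ x, (Real.exp (-x)) ^ n ∂μn := by
  intro n
  have := pt_laplace hp hn h n
  simp_rw [← Real.exp_nat_mul, mul_neg] at *
  exact this

end

noncomputable section

abbrev PtOmega : Type := ↥(Set.Icc (0:ℝ) 1)

instance : CompactSpace PtOmega := isCompact_iff_compactSpace.mp isCompact_Icc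

lemma pt_integrable (ν : Measure PtOmega) [IsFiniteMeasure ν] (f : C(PtOmega, ℝ)) :
    Integrable f ν := by
  refine ⟨f.continuous.aestronglyMeasurable, ?_⟩
  apply HasFiniteIntegral.of_bounded (C := ‖f‖)
  exact Filter.Eventually.of_forall fun t => f.norm_coe_le_norm t

lemma pt_cont_integral (ν : Measure PtOmega) [IsFiniteMeasure ν] :
    Continuous (fun f : C(PtOmega, ℝ) => ∫ t, f t ∂ν) := by
  let L : C(PtOmega, ℝ) →ₗ[ℝ] ℝ :=
    { toFun := fun f => ∫ t, f t ∂ν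
      map_add' := fun f g => by
        simpa using integral_add (pt_integrable ν f) (pt_integrable ν g)
      map_smul' := fun r f => by
        simpa using integral_smul r (f : PtOmega → ℝ) }
  have hbound : ∀ f : C(PtOmega, ℝ), ‖L f‖ ≤ (ν Set.univ).toReal * ‖f‖ := by
    intro f
    have := norm_integral_le_of_norm_le_const (μ := ν) (f := fun t => f t) (C := ‖f‖)
      (Filter.Eventually.of_forall fun t => f.norm_coe_le_norm t)
    calc ‖L f‖ = ‖∫ t, f t ∂ν‖ := rfl
      _ ≤ ‖f‖ * (ν Set.univ).toReal := this
      _ = (ν Set.univ).toReal * ‖f‖ := mul_comm _ _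
  exact (LinearMap.mkContinuous L _ hbound).continuous

lemma pt_sw (νp νn : Measure PtOmega) [IsFiniteMeasure νp] [IsFiniteMeasure νn]
    (hmom : ∀ n : ℕ, ∫ t, ((t : ℝ)) ^ n ∂νp = ∫ t, ((t : ℝ)) ^ n ∂νn) :
    νp = νn := by
  have hSW : ∀ f : C(PtOmega, ℝ), ∫ t, f t ∂νp = ∫ t, f t ∂νn := by
    set S : Set C(PtOmega, ℝ) := {f | ∫ t, f t ∂νp = ∫ t, f t ∂νn} with hS
    have hclosed : IsClosed S := isClosed_eq (pt_cont_integral νp) (pt_cont_integral νn)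
    have hpoly : (polynomialFunctions (Set.Icc (0:ℝ) 1) : Set C(PtOmega, ℝ)) ⊆ S := by
      rw [polynomialFunctions_coe]
      rintro p ⟨q, rfl⟩
      show (∫ t, (Polynomial.toContinuousMapOnAlgHom _ q) t ∂νp)
        = ∫ t, (Polynomial.toContinuousMapOnAlgHom _ q) t ∂νn
      have hev : ∀ t : PtOmega, (Polynomial.toContinuousMapOnAlgHom (Set.Icc (0:ℝ) 1) q) t
          = ∑ i ∈ Finset.range (q.natDegree + 1), q.coeff i * (t : ℝ) ^ i := by
        intro t
        simp [Polynomial.toContinuousMapOnAlgHom, Polynomial.toContinuousMapOn,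
          Polynomial.toContinuousMap]
        exact Polynomial.eval_eq_sum_range _
      simp_rw [hev]
      rw [integral_finset_sum, integral_finset_sum]
      · refine Finset.sum_congr rfl fun i _ => ?_
        rw [integral_const_mul, integral_const_mul, hmom i]
      · intro i _
        exact (pt_integrable νn ⟨_, (continuous_const.mul
          ((continuous_subtype_val.pow i)))⟩)
      · intro i _
        exact (pt_integrable νp ⟨_, (continuous_const.mul
          ((continuous_subtype_val.pow i)))⟩)
    have hdense : closure ((polynomialFunctions (Set.Icc (0:ℝ) 1) : Set C(PtOmega, ℝ))) =
        Set.univ := by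
      rw [← Subalgebra.topologicalClosure_coe,
        polynomialFunctions.topologicalClosure (Set.Icc (0:ℝ) 1)]
      rfl
    intro f
    have hf : f ∈ closure ((polynomialFunctions (Set.Icc (0:ℝ) 1) : Set C(PtOmega, ℝ))) := by
      rw [hdense]; trivial
    exact closure_minimal hpoly hclosed hf
  apply ext_of_forall_lintegral_eq_of_IsFiniteMeasure
  intro f
  have hF : Continuous fun t : PtOmega => ((f t : ℝ)) := NNReal.continuous_coe.comp f.continuous
  have hint : ∀ (ν : Measure PtOmega) [IsFiniteMeasure ν],
      Integrable (fun t => ((f t : ℝ))) ν := fun ν _ => pt_integrable ν ⟨_, hF⟩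
  rw [lintegral_coe_eq_integral _ (hint νp), lintegral_coe_eq_integral _ (hint νn)]
  congr 1
  exact hSW ⟨_, hF⟩

lemma pt_final (μp μn : Measure ℝ) [IsFiniteMeasure μp] [IsFiniteMeasure μn]
    (hp : μp (Set.Iio 0) = 0) (hn : μn (Set.Iio 0) = 0)
    (hmom : ∀ n : ℕ, ∫ x, (Real.exp (-x)) ^ n ∂μp = ∫ x, (Real.exp (-x)) ^ n ∂μn) :
    μp = μn := by
  set g : ℝ → PtOmega := fun x => Set.projIcc 0 1 zero_le_one (Real.exp (-x)) with hg
  have hgc : Continuous g := continuous_projIcc.comp (Real.continuous_exp.comp continuous_neg)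
  have hgm : Measurable g := hgc.measurable
  have hcoe : ∀ x : ℝ, 0 ≤ x → ((g x : ℝ)) = Real.exp (-x) := by
    intro x hx
    have hmem : Real.exp (-x) ∈ Set.Icc (0:ℝ) 1 :=
      ⟨(Real.exp_pos _).le, Real.exp_le_one_iff.mpr (by linarith)⟩
    rw [hg]
    simp only
    rw [Set.projIcc_of_mem _ hmem]
  haveI : IsFiniteMeasure (μp.map g) :=
    ⟨by rw [Measure.map_apply hgm MeasurableSet.univ]; exact measure_lt_top _ _⟩
  haveI : IsFiniteMeasure (μn.map g) :=
    ⟨by rw [Measure.map_apply hgm MeasurableSet.univ]; exact measure_lt_top _ _⟩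
  have hνmom : ∀ n : ℕ, ∫ t, ((t : ℝ)) ^ n ∂(μp.map g) = ∫ t, ((t : ℝ)) ^ n ∂(μn.map g) := by
    intro n
    have hasm : AEStronglyMeasurable (fun t : PtOmega => ((t : ℝ)) ^ n) (μp.map g) :=
      (continuous_subtype_val.pow n).aestronglyMeasurable
    have hasm' : AEStronglyMeasurable (fun t : PtOmega => ((t : ℝ)) ^ n) (μn.map g) :=
      (continuous_subtype_val.pow n).aestronglyMeasurable
    rw [integral_map hgm.aemeasurable hasm, integral_map hgm.aemeasurable hasm']
    have ep : ∫ x, ((g x : ℝ)) ^ n ∂μp = ∫ x, (Real.exp (-x)) ^ n ∂μp := by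
      refine integral_congr_ae ?_
      filter_upwards [pt_ae_nonneg μp hp] with x hx
      rw [hcoe x hx]
    have en : ∫ x, ((g x : ℝ)) ^ n ∂μn = ∫ x, (Real.exp (-x)) ^ n ∂μn := by
      refine integral_congr_ae ?_
      filter_upwards [pt_ae_nonneg μn hn] with x hx
      rw [hcoe x hx]
    rw [ep, en, hmom n]
  have hν : μp.map g = μn.map g := pt_sw _ _ hνmom
  have hinv : Measurable fun t : PtOmega => -Real.log (t : ℝ) :=
    (Real.measurable_log.comp measurable_subtype_coe).neg
  have hback : ∀ (μ : Measure ℝ), IsFiniteMeasure μ → μ (Set.Iio 0) = 0 →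
      (μ.map g).map (fun t : PtOmega => -Real.log (t : ℝ)) = μ := by
    intro μ _ hμ0
    rw [Measure.map_map hinv hgm]
    have hae : ((fun t : PtOmega => -Real.log (t : ℝ)) ∘ g) =ᵐ[μ] id := by
      filter_upwards [pt_ae_nonneg μ hμ0] with x hx
      simp [Function.comp, hcoe x hx, Real.log_exp]
    rw [Measure.map_congr hae, Measure.map_id]
  calc μp = (μp.map g).map (fun t : PtOmega => -Real.log (t : ℝ)) :=
        (hback μp ‹_› hp).symm
    _ = (μn.map g).map (fun t : PtOmega => -Real.log (t : ℝ)) := by rw [hν]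
    _ = μn := hback μn ‹_› hn

end


/-- The Poisson transform, sending a finite signed measure `μ = μp - μn` on `[0,∞)` to the
sequence `k ↦ ∫ x^k/k! e^{-x} dμ(x)`, is injective: if `Pμ = 0` then `μ = 0`. -/
theorem poisson_transform_injective
    (μp μn : Measure ℝ) [IsFiniteMeasure μp] [IsFiniteMeasure μn]
    (hp : μp (Set.Iio 0) = 0) (hn : μn (Set.Iio 0) = 0)
    (h : ∀ k : ℕ,
      (∫ x, x ^ k / (Nat.factorial k) * Real.exp (-x) ∂μp)
        = ∫ x, x ^ k / (Nat.factorial k) * Real.exp (-x) ∂μn) :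
    μp = μn :=
  pt_final μp μn hp hn (pt_expmom hp hn h)
end

section
/- Let H ∈ ℝ^{n×n} be an irreducible matrix with nonnegative off-diagonal entries and columns summing to zero (H_{i,j} = r_{j,i} ≥ 0 for i ≠ j, H_{i,i} = −∑_{j≠i} r_{i,j}). Then 0 is a simple eigenvalue of H and every other eigenvalue of H has strictly negative real part. -/
open Matrix Polynomial Finset

/-- Characteristic polynomial is invariant under transpose. -/
private lemma charpoly_transpose_aux {m : Type*} [DecidableEq m] [Fintype m] {R : Type*}
    [CommRing R] (M : Matrix m m R) : M.transpose.charpoly = M.charpoly := by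
  have h : charmatrix Mᵀ = (charmatrix M)ᵀ := by
    ext i j
    by_cases h : i = j
    · subst h; simp [charmatrix_apply_eq]
    · rw [transpose_apply, charmatrix_apply_ne _ _ _ h,
        charmatrix_apply_ne _ _ _ (Ne.symm h), transpose_apply]
  rw [Matrix.charpoly, h, det_transpose, Matrix.charpoly]

/-- Max principle: if `Hᵀ x` is a constant vector `a` (for a column-sum-zero matrix with
nonnegative off-diagonal entries) then `a ≤ 0`. -/
private lemma aux_le {n : ℕ} (hn : 0 < n) (H : Matrix (Fin n) (Fin n) ℝ)
    (hoff : ∀ i j, i ≠ j → 0 ≤ H i j) (hcol : ∀ j, ∑ i, H i j = 0)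
    (x : Fin n → ℝ) (a : ℝ) (hx : ∀ i, ∑ k, H k i * x k = a) : a ≤ 0 := by
  obtain ⟨i0, -, hmax⟩ := Finset.exists_max_image Finset.univ x ⟨⟨0, hn⟩, Finset.mem_univ _⟩
  have h1 : ∑ k, H k i0 * (x k - x i0) = a := by
    have := hx i0
    have h2 : ∑ k, H k i0 * (x k - x i0) = (∑ k, H k i0 * x k) - (∑ k, H k i0) * x i0 := by
      rw [Finset.sum_mul, ← Finset.sum_sub_distrib]
      exact Finset.sum_congr rfl fun k _ => by ring
    rw [h2, hcol, this, zero_mul, sub_zero]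
  rw [← h1]
  apply Finset.sum_nonpos
  intro k _
  by_cases hk : k = i0
  · subst hk; simp
  · exact mul_nonpos_of_nonneg_of_nonpos (hoff k i0 hk)
      (sub_nonpos.mpr (hmax k (Finset.mem_univ _)))

/-- If `Hᵀ x` is constant then the constant is zero. -/
private lemma aux_zero {n : ℕ} (hn : 0 < n) (H : Matrix (Fin n) (Fin n) ℝ)
    (hoff : ∀ i j, i ≠ j → 0 ≤ H i j) (hcol : ∀ j, ∑ i, H i j = 0)
    (x : Fin n → ℝ) (a : ℝ) (hx : ∀ i, ∑ k, H k i * x k = a) : a = 0 := by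
  have h1 := aux_le hn H hoff hcol x a hx
  have h2 := aux_le hn H hoff hcol (fun k => - x k) (-a) (fun i => by
    rw [← hx i, ← Finset.sum_neg_distrib]
    exact Finset.sum_congr rfl fun k _ => by ring)
  linarith

/-- Kernel vectors of `Hᵀ` (over `ℂ`) are constant, by irreducibility. -/
private lemma ker_const {n : ℕ} (hn : 0 < n) (H : Matrix (Fin n) (Fin n) ℝ)
    (hoff : ∀ i j, i ≠ j → 0 ≤ H i j) (hcol : ∀ j, ∑ i, H i j = 0)
    (hirr : ∀ i j : Fin n, i ≠ j → Relation.TransGen (fun a b => 0 < H b a) i j)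
    (v : Fin n → ℂ) (hv : ∀ i, ∑ k, (H k i : ℂ) * v k = 0) :
    ∀ j, v j = v ⟨0, hn⟩ := by
  obtain ⟨i0, -, hmax⟩ := Finset.exists_max_image Finset.univ (fun i => ‖v i‖)
    ⟨⟨0, hn⟩, Finset.mem_univ _⟩
  set m : ℝ := ‖v i0‖ with hm
  -- the key propagation step
  have step : ∀ a : Fin n, v a = v i0 → ∀ b : Fin n, 0 < H b a → v b = v i0 := by
    intro a ha b hb
    by_cases hba : b = a
    · subst hba; exact ha
    have habs : ‖v a‖ = m := by rw [ha]
    have key : ∑ k, H k a * (((starRingEnd ℂ) (v a) * v k).re - m ^ 2) = 0 := by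
      have h1 : ∑ k, ((starRingEnd ℂ) (v a) * ((H k a : ℂ) * v k)) = 0 := by
        rw [← Finset.mul_sum, hv a, mul_zero]
      have h2 : ∑ k, H k a * ((starRingEnd ℂ) (v a) * v k).re = 0 := by
        have h1' := congrArg Complex.re h1
        rw [Complex.re_sum, Complex.zero_re] at h1'
        rw [← h1']
        refine Finset.sum_congr rfl fun k _ => ?_
        rw [mul_left_comm, Complex.re_ofReal_mul]
      have h3 : ∑ k, H k a * m ^ 2 = 0 := by
        rw [← Finset.sum_mul, hcol a, zero_mul]
      have h4 : ∑ k, H k a * (((starRingEnd ℂ) (v a) * v k).re - m ^ 2)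
          = (∑ k, H k a * ((starRingEnd ℂ) (v a) * v k).re) - ∑ k, H k a * m ^ 2 := by
        rw [← Finset.sum_sub_distrib]; exact Finset.sum_congr rfl fun k _ => by ring
      rw [h4, h2, h3, sub_zero]
    have hterm : ∀ k ∈ Finset.univ, H k a * (((starRingEnd ℂ) (v a) * v k).re - m ^ 2) ≤ 0 := by
      intro k _
      by_cases hk : k = a
      · subst hk
        have : ((starRingEnd ℂ) (v k) * v k).re = m ^ 2 := by
          rw [mul_comm, Complex.mul_conj, Complex.ofReal_re, ← Complex.sq_norm, habs]
        rw [this, sub_self, mul_zero]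
      · apply mul_nonpos_of_nonneg_of_nonpos (hoff k a hk)
        rw [sub_nonpos]
        calc ((starRingEnd ℂ) (v a) * v k).re ≤ ‖(starRingEnd ℂ) (v a) * v k‖ :=
              Complex.re_le_norm _
          _ = ‖v a‖ * ‖v k‖ := by
              rw [norm_mul, Complex.norm_conj]
          _ ≤ m * m := by
              rw [habs]
              exact mul_le_mul_of_nonneg_left (hmax k (Finset.mem_univ _)) (norm_nonneg _)
          _ = m ^ 2 := by ring
    have hall := (Finset.sum_eq_zero_iff_of_nonpos hterm).mp key b (Finset.mem_univ _)
    have hre : ((starRingEnd ℂ) (v a) * v b).re = m ^ 2 := by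
      rcases mul_eq_zero.mp hall with h | h
      · exact absurd h (ne_of_gt hb)
      · linarith [sub_eq_zero.mp h]
    have hnsq : Complex.normSq (v b - v a) = Complex.normSq (v b) - m ^ 2 := by
      rw [Complex.normSq_sub]
      have h4 : (v b * (starRingEnd ℂ) (v a)).re = m ^ 2 := by rw [mul_comm]; exact hre
      have h5 : Complex.normSq (v a) = m ^ 2 := by rw [← Complex.sq_norm, habs]
      rw [h4, h5]; ring
    have h6 : Complex.normSq (v b) ≤ m ^ 2 := by
      rw [← Complex.sq_norm]
      have := hmax b (Finset.mem_univ _)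
      nlinarith [norm_nonneg (v b)]
    have h7 : Complex.normSq (v b - v a) = 0 := le_antisymm (by linarith) (Complex.normSq_nonneg _)
    have := sub_eq_zero.mp (Complex.normSq_eq_zero.mp h7)
    rw [this, ha]
  have hreach : ∀ j, Relation.TransGen (fun a b => 0 < H b a) i0 j → v j = v i0 := by
    intro j h
    induction h with
    | single hr => exact step i0 rfl _ hr
    | tail _ hr ih => exact step _ ih _ hr
  have hconst : ∀ j, v j = v i0 := by
    intro j
    by_cases hj : j = i0
    · rw [hj]
    · exact hreach j (hirr i0 j (fun h => hj h.symm))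
  intro j
  rw [hconst j, hconst ⟨0, hn⟩]

/-- For an irreducible transition-rate matrix `H` (nonnegative off-diagonal entries, columns
summing to zero, strongly connected rate graph), `0` is a simple eigenvalue of `H` and every
other eigenvalue has strictly negative real part. Eigenvalues are the roots of the
characteristic polynomial of `H` viewed as a complex matrix. -/
theorem rate_matrix_spectrum
    (n : ℕ) (hn : 0 < n) (H : Matrix (Fin n) (Fin n) ℝ)
    (hoff : ∀ i j, i ≠ j → 0 ≤ H i j)
    (hcol : ∀ j, ∑ i, H i j = 0)
    (hirr : ∀ i j : Fin n, i ≠ j → Relation.TransGen (fun a b => 0 < H b a) i j) :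
    Polynomial.rootMultiplicity 0 (H.map (Complex.ofReal ·)).charpoly = 1
    ∧ ∀ μ : ℂ, (H.map (Complex.ofReal ·)).charpoly.IsRoot μ → μ ≠ 0 → μ.re < 0 := by
  set M : Matrix (Fin n) (Fin n) ℂ := H.map (Complex.ofReal ·) with hM
  set G : Matrix (Fin n) (Fin n) ℂ := Mᵀ with hG
  have hGapp : ∀ i k, G i k = (H k i : ℂ) := fun i k => rfl
  have hcolC : ∀ i, ∑ k, (H k i : ℂ) = 0 := by
    intro i
    rw [show ∑ k, ((H k i : ℝ) : ℂ) = ((∑ k, H k i : ℝ) : ℂ) by push_cast; ring]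
    rw [hcol i, Complex.ofReal_zero]
  have hcpT : M.charpoly = G.charpoly := (charpoly_transpose_aux M).symm
  -- the linear endomorphism given by G
  set φ : Module.End ℂ (Fin n → ℂ) := Matrix.toLin' G with hφ
  have hφapp : ∀ (x : Fin n → ℂ) (i), φ x i = ∑ k, (H k i : ℂ) * x k := by
    intro x i
    simp [hφ, Matrix.toLin'_apply, Matrix.mulVec, dotProduct, hGapp]
  constructor
  · -- simple eigenvalue 0
    have hker_const : ∀ x : Fin n → ℂ, φ x = 0 → ∃ c : ℂ, ∀ j, x j = c := by
      intro x hx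
      refine ⟨x ⟨0, hn⟩, ker_const hn H hoff hcol hirr x fun i => ?_⟩
      rw [← hφapp x i, hx]; rfl
    have hstep : ∀ x : Fin n → ℂ, φ (φ x) = 0 → φ x = 0 := by
      intro x hx
      obtain ⟨c, hc⟩ := hker_const (φ x) hx
      have hre : ∀ i, ∑ k, H k i * (x k).re = c.re := by
        intro i
        have := congrArg Complex.re ((hφapp x i).symm.trans (hc i))
        rw [Complex.re_sum] at this
        rw [← this]
        exact Finset.sum_congr rfl fun k _ => by rw [Complex.re_ofReal_mul]
      have him : ∀ i, ∑ k, H k i * (x k).im = c.im := by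
        intro i
        have := congrArg Complex.im ((hφapp x i).symm.trans (hc i))
        rw [Complex.im_sum] at this
        rw [← this]
        refine Finset.sum_congr rfl fun k _ => ?_
        exact (Complex.im_ofReal_mul _ _).symm
      have hcre : c.re = 0 := aux_zero hn H hoff hcol _ _ hre
      have hcim : c.im = 0 := aux_zero hn H hoff hcol _ _ him
      have hc0 : c = 0 := Complex.ext hcre hcim
      funext i
      rw [show φ x i = c from hc i, hc0]; rfl
    have hpow : ∀ (k : ℕ) (x : Fin n → ℂ), (φ ^ k) x = 0 → φ x = 0 := by
      intro k
      induction k with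
      | zero =>
          intro x hx
          rw [pow_zero, Module.End.one_apply] at hx
          rw [hx, map_zero]
      | succ k ih =>
          intro x hx
          rw [pow_succ, Module.End.mul_apply] at hx
          exact hstep x (ih (φ x) hx)
    have hone : φ (fun _ => (1 : ℂ)) = 0 := by
      funext i
      rw [hφapp]
      simpa using hcolC i
    have hker_eq : LinearMap.ker φ = Submodule.span ℂ {(fun _ => (1 : ℂ) : Fin n → ℂ)} := by
      apply le_antisymm
      · intro x hx
        obtain ⟨c, hc⟩ := hker_const x (LinearMap.mem_ker.mp hx)
        rw [Submodule.mem_span_singleton]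
        exact ⟨c, by funext j; simp [hc j]⟩
      · rw [Submodule.span_singleton_le_iff_mem]
        exact LinearMap.mem_ker.mpr hone
    have hmax_eq : φ.maxGenEigenspace 0 = LinearMap.ker φ := by
      ext x
      rw [Module.End.mem_maxGenEigenspace, LinearMap.mem_ker]
      simp only [zero_smul, sub_zero]
      constructor
      · rintro ⟨k, hk⟩; exact hpow k x hk
      · intro h; exact ⟨1, by simpa using h⟩
    have hne : (fun _ => (1 : ℂ) : Fin n → ℂ) ≠ 0 := by
      intro h
      have := congrFun h ⟨0, hn⟩
      simp at this
    have hfr : Module.finrank ℂ (φ.maxGenEigenspace 0) = 1 := by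
      rw [hmax_eq, hker_eq]
      exact finrank_span_singleton hne
    have hcpφ : M.charpoly = φ.charpoly := by
      rw [hcpT, hφ, ← LinearMap.charpoly_toMatrix (Matrix.toLin' G) (Pi.basisFun ℂ (Fin n)),
        LinearMap.toMatrix_eq_toMatrix', LinearMap.toMatrix'_toLin']
    rw [Polynomial.rootMultiplicity_eq_natTrailingDegree', hcpφ,
      ← LinearMap.finrank_maxGenEigenspace_zero_eq, hfr]
  · -- all other eigenvalues have negative real part
    intro μ hroot hμ
    by_contra hcon
    push_neg at hcon
    have hroot' : G.charpoly.IsRoot μ := by rwa [← hcpT]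
    have hdet : (Matrix.scalar (Fin n) μ - G).det = 0 := by
      have := hroot'
      rw [Polynomial.IsRoot, Matrix.charpoly, _root_.eval_det, matPolyEquiv_charmatrix] at this
      simpa using this
    obtain ⟨v, hv0, hveq⟩ := Matrix.exists_mulVec_eq_zero_iff.mpr hdet
    have hGv : ∀ i, ∑ k, (H k i : ℂ) * v k = μ * v i := by
      intro i
      have := congrFun hveq i
      rw [Matrix.sub_mulVec] at this
      have hsc : (Matrix.scalar (Fin n) μ).mulVec v i = μ * v i := by
        simp [Matrix.scalar, Matrix.mulVec_diagonal]
      have hGm : G.mulVec v i = ∑ k, (H k i : ℂ) * v k := by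
        simp [Matrix.mulVec, dotProduct, hGapp]
      simp only [Pi.sub_apply, Pi.zero_apply] at this
      rw [hsc, hGm] at this
      linear_combination -this
    obtain ⟨i0, -, hmax⟩ := Finset.exists_max_image Finset.univ (fun i => ‖v i‖)
      ⟨⟨0, hn⟩, Finset.mem_univ _⟩
    set m : ℝ := ‖v i0‖ with hm
    have hmpos : 0 < m := by
      by_contra hmn
      push_neg at hmn
      apply hv0
      funext j
      have h1 := hmax j (Finset.mem_univ _)
      have := norm_nonneg (v j)
      have : ‖v j‖ = 0 := le_antisymm (le_trans h1 hmn) (norm_nonneg _)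
      simpa using norm_eq_zero.mp this
    set c : ℝ := H i0 i0 with hc
    have hsum : ∑ k ∈ Finset.univ.erase i0, H k i0 = -c := by
      have := hcol i0
      rw [← Finset.sum_erase_add _ _ (Finset.mem_univ i0)] at this
      linarith
    have hcnp : c ≤ 0 := by
      have : 0 ≤ ∑ k ∈ Finset.univ.erase i0, H k i0 :=
        Finset.sum_nonneg fun k hk => hoff k i0 (Finset.mem_erase.mp hk).1
      linarith
    have hrow : ∑ k ∈ Finset.univ.erase i0, (H k i0 : ℂ) * v k = (μ - (c : ℂ)) * v i0 := by
      have := hGv i0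
      rw [← Finset.sum_erase_add _ _ (Finset.mem_univ i0)] at this
      have hcc : ((c : ℝ) : ℂ) = ((H i0 i0 : ℝ) : ℂ) := by rw [hc]
      linear_combination this + v i0 * hcc
    have habs : ‖μ - (c : ℂ)‖ * m ≤ (-c) * m := by
      calc ‖μ - (c : ℂ)‖ * m = ‖(μ - (c : ℂ)) * v i0‖ := by
            rw [norm_mul, hm]
        _ = ‖∑ k ∈ Finset.univ.erase i0, (H k i0 : ℂ) * v k‖ := by rw [hrow]
        _ ≤ ∑ k ∈ Finset.univ.erase i0, ‖(H k i0 : ℂ) * v k‖ :=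
            norm_sum_le _ _
        _ ≤ ∑ k ∈ Finset.univ.erase i0, H k i0 * m := by
            refine Finset.sum_le_sum fun k hk => ?_
            rw [norm_mul, Complex.norm_real, Real.norm_eq_abs,
              abs_of_nonneg (hoff k i0 (Finset.mem_erase.mp hk).1)]
            exact mul_le_mul_of_nonneg_left (hmax k (Finset.mem_univ _))
              (hoff k i0 (Finset.mem_erase.mp hk).1)
        _ = (-c) * m := by rw [← Finset.sum_mul, hsum]
    have habs2 : ‖μ - (c : ℂ)‖ ≤ -c := le_of_mul_le_mul_right habs hmpos
    have hnsq : (μ.re - c) ^ 2 + μ.im ^ 2 ≤ c ^ 2 := by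
      have h1 : Complex.normSq (μ - (c : ℂ)) ≤ (-c) ^ 2 := by
        rw [← Complex.sq_norm]
        nlinarith [norm_nonneg (μ - (c : ℂ))]
      rw [Complex.normSq_apply] at h1
      simp only [Complex.sub_re, Complex.ofReal_re, Complex.sub_im, Complex.ofReal_im,
        sub_zero] at h1
      nlinarith
    have hre0 : μ.re = 0 := by nlinarith [sq_nonneg μ.re, sq_nonneg μ.im]
    have him0 : μ.im = 0 := by nlinarith [sq_nonneg μ.im]
    exact hμ (Complex.ext hre0 him0)
end

section
/- Let H be an irreducible transition-rate matrix (transpose of an irreducible generator) as above, and for i ∈ {1,…,n} let H_{\{i\}} be the principal submatrix obtained by deleting the i-th row and column of H. Then every eigenvalue of H_{\{i\}} has strictly negative real part; in particular det(H_{\{i\}}) ≠ 0. -/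
open Matrix

private lemma charpoly_eval_aux {n : ℕ} (B : Matrix (Fin n) (Fin n) ℂ) (μ : ℂ) :
    B.charpoly.eval μ = (μ • (1 : Matrix (Fin n) (Fin n) ℂ) - B).det := by
  rw [Matrix.charpoly, ← Polynomial.coe_evalRingHom, RingHom.map_det]
  congr 1
  ext k l
  by_cases h : k = l
  · subst h
    simp [Matrix.charmatrix_apply_eq, Matrix.one_apply]
  · simp [Matrix.charmatrix_apply_ne _ _ _ h, Matrix.one_apply, h]

/-- For an irreducible transition-rate matrix `H` on `n = N+1` states, every eigenvalue of
the principal submatrix `H_{\{i\}}` (delete the `i`-th row and column) has strictly negative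
real part; in particular `det H_{\{i\}} ≠ 0`. -/
theorem rate_matrix_principal_submatrix_spectrum
    (N : ℕ) (H : Matrix (Fin (N + 1)) (Fin (N + 1)) ℝ)
    (hoff : ∀ i j, i ≠ j → 0 ≤ H i j)
    (hcol : ∀ j, ∑ i, H i j = 0)
    (hirr : ∀ i j : Fin (N + 1), i ≠ j → Relation.TransGen (fun a b => 0 < H b a) i j)
    (i : Fin (N + 1)) :
    (∀ μ : ℂ,
        ((H.submatrix i.succAbove i.succAbove).map (Complex.ofReal ·)).charpoly.IsRoot μ →
        μ.re < 0)
    ∧ (H.submatrix i.succAbove i.succAbove).det ≠ 0 := by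
  have hdiag : ∀ x, H x x ≤ 0 := by
    intro x
    have h1 := hcol x
    rw [← Finset.add_sum_erase _ _ (Finset.mem_univ x)] at h1
    have h2 : (0:ℝ) ≤ ∑ k ∈ Finset.univ.erase x, H k x :=
      Finset.sum_nonneg fun k hk => hoff k x (Finset.ne_of_mem_erase hk)
    linarith
  have key : ∀ μ : ℂ,
      ((H.submatrix i.succAbove i.succAbove).map (Complex.ofReal ·)).charpoly.IsRoot μ →
      μ.re < 0 := by
    intro μ hroot
    by_contra hre
    push_neg at hre
    set B : Matrix (Fin N) (Fin N) ℂ :=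
      (H.submatrix i.succAbove i.succAbove).map (Complex.ofReal ·) with hB
    have hBapp : ∀ k j : Fin N, B k j = ((H (i.succAbove k) (i.succAbove j) : ℝ) : ℂ) := by
      intro k j; simp [hB, Matrix.map_apply, Matrix.submatrix_apply]
    have hdet : ((μ • (1 : Matrix (Fin N) (Fin N) ℂ)) - B).det = 0 := by
      rw [← charpoly_eval_aux]; exact hroot
    have hdetT : (((μ • (1 : Matrix (Fin N) (Fin N) ℂ)) - B)ᵀ).det = 0 := by
      rwa [Matrix.det_transpose]
    obtain ⟨v, hv0, hv⟩ := Matrix.exists_mulVec_eq_zero_iff.mpr hdetT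
    -- column equations: ∑ k, B k j * v k = μ * v j
    have heq : ∀ j, ∑ k, B k j * v k = μ * v j := by
      intro j
      have h1 : ∑ k, (((μ • (1 : Matrix (Fin N) (Fin N) ℂ)) - B)ᵀ) j k * v k = 0 :=
        congrFun hv j
      have h2 : ∑ k, (((μ • (1 : Matrix (Fin N) (Fin N) ℂ)) - B)ᵀ) j k * v k
          = μ * v j - ∑ k, B k j * v k := by
        simp only [Matrix.transpose_apply, Matrix.sub_apply, Matrix.smul_apply,
          Matrix.one_apply, sub_mul, Finset.sum_sub_distrib, smul_eq_mul, mul_ite, mul_zero,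
          ite_mul, zero_mul, Finset.sum_ite_eq', Finset.mem_univ, if_true, mul_one]
      rw [h2] at h1
      exact (sub_eq_zero.mp h1).symm
    -- pick the index with maximal |v|
    obtain ⟨j₁, hj₁⟩ : ∃ j, v j ≠ 0 := Function.ne_iff.mp hv0
    obtain ⟨j₀, -, hmax⟩ := Finset.exists_max_image Finset.univ (fun j => ‖v j‖)
      ⟨j₁, Finset.mem_univ j₁⟩
    set M : ℝ := ‖v j₀‖ with hMdef
    have hmax' : ∀ k, ‖v k‖ ≤ M := fun k => hmax k (Finset.mem_univ k)
    have hM : 0 < M := lt_of_lt_of_le (norm_pos_iff.mpr hj₁) (hmax' j₁)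
    -- the key local claim at any index with maximal |v|
    have claim : ∀ j : Fin N, ‖v j‖ = M →
        H i (i.succAbove j) = 0 ∧
        ∀ k, k ≠ j → 0 < H (i.succAbove k) (i.succAbove j) → ‖v k‖ = M := by
      intro j hj
      set a : ℝ := H (i.succAbove j) (i.succAbove j) with hadef
      set R : ℝ := ∑ k ∈ Finset.univ.erase j, H (i.succAbove k) (i.succAbove j) with hRdef
      have hnn : ∀ k ∈ Finset.univ.erase j,
          0 ≤ H (i.succAbove k) (i.succAbove j) := by
        intro k hk
        exact hoff _ _ (fun hE => (Finset.ne_of_mem_erase hk)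
          (Fin.succAbove_right_injective hE))
      -- column sum of H at i.succAbove j
      have hsum : H i (i.succAbove j) + (a + R) = 0 := by
        have h1 := hcol (i.succAbove j)
        rw [Fin.sum_univ_succAbove (fun k => H k (i.succAbove j)) i] at h1
        rw [← Finset.add_sum_erase _ _ (Finset.mem_univ j)] at h1
        rw [hadef, hRdef]
        linarith
      have hHinn : 0 ≤ H i (i.succAbove j) := hoff _ _ (Fin.ne_succAbove i j)
      -- rearranged eigen-equation
      have step1 : (μ - (a : ℂ)) * v j = ∑ k ∈ Finset.univ.erase j, B k j * v k := by
        have h1 := heq j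
        rw [← Finset.add_sum_erase _ _ (Finset.mem_univ j)] at h1
        have : B j j = (a : ℂ) := by rw [hBapp]
        rw [this] at h1
        linear_combination -h1
      -- norm chain
      have n1 : ‖μ - (a : ℂ)‖ * M
          ≤ ∑ k ∈ Finset.univ.erase j, H (i.succAbove k) (i.succAbove j) * ‖v k‖ := by
        calc ‖μ - (a : ℂ)‖ * M = ‖(μ - (a : ℂ)) * v j‖ := by
              rw [norm_mul, hj]
          _ = ‖∑ k ∈ Finset.univ.erase j, B k j * v k‖ := by rw [step1]
          _ ≤ ∑ k ∈ Finset.univ.erase j, ‖B k j * v k‖ := norm_sum_le _ _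
          _ = ∑ k ∈ Finset.univ.erase j, H (i.succAbove k) (i.succAbove j) * ‖v k‖ := by
              refine Finset.sum_congr rfl fun k hk => ?_
              rw [norm_mul, hBapp, Complex.norm_real, Real.norm_eq_abs,
                abs_of_nonneg (hnn k hk)]
      have n2 : ∑ k ∈ Finset.univ.erase j, H (i.succAbove k) (i.succAbove j) * ‖v k‖
          ≤ R * M := by
        rw [hRdef, Finset.sum_mul]
        exact Finset.sum_le_sum fun k hk =>
          mul_le_mul_of_nonneg_left (hmax' k) (hnn k hk)
      have n3 : R ≤ -a := by linarith
      have n4 : -a ≤ ‖μ - (a : ℂ)‖ := by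
        have h1 : (μ - (a : ℂ)).re ≤ ‖μ - (a : ℂ)‖ := Complex.re_le_norm _
        have h2 : (μ - (a : ℂ)).re = μ.re - a := by simp
        linarith
      have hRnn : 0 ≤ R := Finset.sum_nonneg hnn
      -- all inequalities are equalities
      have e0 : ‖μ - (a : ℂ)‖ * M = R * M := by nlinarith
      have eT : ∑ k ∈ Finset.univ.erase j, H (i.succAbove k) (i.succAbove j) * ‖v k‖
          = R * M := by nlinarith
      have eR : R = -a := by nlinarith
      constructor
      · linarith
      · intro k hkj hkpos
        -- termwise equality in eT
        have hsum0 : ∑ k ∈ Finset.univ.erase j,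
            (H (i.succAbove k) (i.succAbove j) * M
              - H (i.succAbove k) (i.succAbove j) * ‖v k‖) = 0 := by
          rw [Finset.sum_sub_distrib, eT, ← Finset.sum_mul, ← hRdef]
          exact sub_self _
        have hterm := (Finset.sum_eq_zero_iff_of_nonneg
          (fun k hk => by
            have := mul_le_mul_of_nonneg_left (hmax' k) (hnn k hk)
            linarith)).mp hsum0 k (Finset.mem_erase.mpr ⟨hkj, Finset.mem_univ k⟩)
        have : H (i.succAbove k) (i.succAbove j) * (M - ‖v k‖) = 0 := by linarith
        rcases mul_eq_zero.mp this with h | h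
        · exact absurd h (ne_of_gt hkpos)
        · linarith
    -- propagate maximality along the graph toward i
    have hstep : ∀ x y : Fin (N + 1),
        (∃ j : Fin N, i.succAbove j = x ∧ ‖v j‖ = M) → 0 < H y x →
        y ≠ i ∧ (∃ j : Fin N, i.succAbove j = y ∧ ‖v j‖ = M) := by
      rintro x y ⟨j, rfl, hj⟩ hy
      obtain ⟨hHi, hprop⟩ := claim j hj
      have hyi : y ≠ i := by
        rintro rfl
        rw [hHi] at hy
        exact lt_irrefl 0 hy
      obtain ⟨k, hk⟩ := Fin.exists_succAbove_eq hyi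
      have hkj : k ≠ j := by
        rintro rfl
        rw [← hk] at hy
        exact absurd hy (not_lt.mpr (hdiag _))
      exact ⟨hyi, k, hk, hprop k hkj (by rw [hk]; exact hy)⟩
    have hfalse : ∀ x : Fin (N + 1),
        Relation.TransGen (fun a b => 0 < H b a) x i →
        (∃ j : Fin N, i.succAbove j = x ∧ ‖v j‖ = M) → False := by
      intro x hx
      induction hx using Relation.TransGen.head_induction_on with
      | single h => exact fun hPx => (hstep _ _ hPx h).1 rfl
      | head h _ ihp => exact fun hPx => ihp ((hstep _ _ hPx h).2)
    exact hfalse (i.succAbove j₀)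
      (hirr _ _ (Fin.succAbove_ne i j₀)) ⟨j₀, rfl, rfl⟩
  refine ⟨key, ?_⟩
  intro hdet0
  have h0 : ((H.submatrix i.succAbove i.succAbove).map (Complex.ofReal ·)).charpoly.IsRoot 0 := by
    have hd : (((H.submatrix i.succAbove i.succAbove).map (Complex.ofReal ·)) :
        Matrix (Fin N) (Fin N) ℂ).det = 0 := by
      have := RingHom.map_det Complex.ofRealHom (H.submatrix i.succAbove i.succAbove)
      rw [hdet0] at this
      have h' : ((H.submatrix i.succAbove i.succAbove).map ⇑Complex.ofRealHom).det = 0 := by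
        simpa using this.symm
      exact h'
    unfold Polynomial.IsRoot
    rw [charpoly_eval_aux]
    rw [zero_smul, zero_sub, Matrix.det_neg, hd]
    simp
  have := key 0 h0
  simp at this
end

section
/- Let H be an irreducible transition-rate matrix with column sums zero, n = N+1 states. For each i, let a^i_1,…,a^i_N be the eigenvalues of −H_{\{i\}} and let b_1,…,b_N be the nonzero eigenvalues of −H. Then ∏_{k=1}^N b_k = ∑_{i=1}^n ∏_{k=1}^N a^i_k, and the stationary distribution π of the Markov chain with generator Hᵀ satisfies π_i = ∏_{k=1}^N (a^i_k / b_k). -/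
open Polynomial
open Matrix

lemma derivative_finset_prod {R : Type*} [CommRing R] {ι : Type*} [DecidableEq ι]
    (s : Finset ι) (f : ι → R[X]) :
    derivative (∏ i ∈ s, f i) = ∑ j ∈ s, (∏ i ∈ s.erase j, f i) * derivative (f j) := by
  induction s using Finset.induction_on with
  | empty => simp
  | insert c s ha ih =>
    rw [Finset.prod_insert ha, derivative_mul, ih, Finset.sum_insert ha,
      Finset.erase_insert ha, Finset.mul_sum]
    congr 1
    · exact mul_comm _ _
    refine Finset.sum_congr rfl fun j hj => ?_
    rw [Finset.erase_insert_of_ne (by rintro rfl; exact ha hj),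
      Finset.prod_insert (fun h => ha (Finset.mem_of_mem_erase h)), mul_assoc]

lemma derivative_det_eq_sum {n : Type*} [Fintype n] [DecidableEq n] {R : Type*} [CommRing R]
    (M : Matrix n n R[X]) :
    derivative (det M) = ∑ j, det (M.updateCol j (fun i => derivative (M i j))) := by
  have key : derivative (det M)
      = ∑ σ : Equiv.Perm n, ∑ j, (Equiv.Perm.sign σ : ℤ) •
          ((∏ i ∈ Finset.univ.erase j, M (σ i) i) * derivative (M (σ j) j)) := by
    rw [det_apply, map_sum]
    refine Finset.sum_congr rfl fun σ _ => ?_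
    rw [Units.smul_def, map_zsmul, derivative_finset_prod, Finset.smul_sum]
  rw [key, Finset.sum_comm]
  refine Finset.sum_congr rfl fun j _ => ?_
  rw [det_apply]
  refine Finset.sum_congr rfl fun σ _ => ?_
  rw [Units.smul_def]
  congr 1
  rw [← Finset.mul_prod_erase Finset.univ _ (Finset.mem_univ j), updateCol_self, mul_comm]
  congr 1
  exact Finset.prod_congr rfl fun i hi =>
    (updateCol_ne (Finset.mem_erase.mp hi).1).symm
lemma charmatrix_submatrix {n m : Type*} [Fintype n] [DecidableEq n] [Fintype m] [DecidableEq m]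
    {R : Type*} [CommRing R] (M : Matrix n n R) (f : m → n) (hf : Function.Injective f) :
    (charmatrix M).submatrix f f = charmatrix (M.submatrix f f) := by
  ext i j
  by_cases h : i = j
  · subst h; simp [charmatrix_apply_eq]
  · simp [charmatrix_apply_ne _ _ _ (hf.ne h), charmatrix_apply_ne _ _ _ h,
      submatrix_apply]

lemma det_updateColumn_single {n : ℕ} {R : Type*} [CommRing R]
    (M : Matrix (Fin (n+1)) (Fin (n+1)) R) (j : Fin (n+1)) :
    det (M.updateCol j (Pi.single j 1)) = det (M.submatrix j.succAbove j.succAbove) := by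
  have h1 : (M.updateCol j (Pi.single j 1)) = (Mᵀ.updateRow j (Pi.single j 1))ᵀ := by
    rw [← updateCol_transpose, transpose_transpose]
  rw [h1, det_transpose, ← adjugate_apply, adjugate_fin_succ_eq_det_submatrix]
  have : ((-1 : R)) ^ ((j : ℕ) + (j : ℕ)) = 1 := by
    rw [← two_mul, pow_mul]; norm_num
  rw [this, one_mul, ← det_transpose, transpose_submatrix, transpose_transpose]

lemma derivative_charpoly {n : ℕ} {R : Type*} [CommRing R]
    (M : Matrix (Fin (n+1)) (Fin (n+1)) R) :
    derivative (M.charpoly) = ∑ j : Fin (n+1), (M.submatrix j.succAbove j.succAbove).charpoly := by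
  rw [charpoly, derivative_det_eq_sum]
  refine Finset.sum_congr rfl fun j _ => ?_
  have hder : (fun i => derivative (charmatrix M i j)) = Pi.single j 1 := by
    funext i
    by_cases h : i = j
    · subst h; rw [charmatrix_apply_eq, derivative_sub, derivative_X, derivative_C, sub_zero,
        Pi.single_eq_same]
    · rw [charmatrix_apply_ne _ _ _ h, derivative_neg, derivative_C, neg_zero,
        Pi.single_eq_of_ne h]
  rw [hder, det_updateColumn_single, charmatrix_submatrix _ _ (Fin.succAbove_right_injective),
    charpoly]
lemma kernel_coord {n : ℕ} (A : Matrix (Fin (n+1)) (Fin (n+1)) ℂ) (j : Fin (n+1))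
    (hM : IsUnit ((A.submatrix j.succAbove j.succAbove).det))
    (v : Fin (n+1) → ℂ) (hv : A.mulVec v = 0) (hvj : v j = 0) : v = 0 := by
  set f := j.succAbove with hf
  have hsub : (A.submatrix f f).mulVec (v ∘ f) = 0 := by
    funext k
    have h0 : ∑ l, A (f k) l * v l = 0 := by
      have := congrFun hv (f k)
      simpa [mulVec, dotProduct] using this
    have hsplit := Fin.sum_univ_succAbove (fun l => A (f k) l * v l) j
    rw [hsplit, hvj, mul_zero, zero_add] at h0
    simpa [mulVec, dotProduct, submatrix_apply, Function.comp] using h0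
  have hvf : v ∘ f = 0 := by
    have h2 := congrArg (fun w => (A.submatrix f f)⁻¹.mulVec w) hsub
    simpa [mulVec_mulVec, nonsing_inv_mul _ hM] using h2
  funext l
  rcases eq_or_ne l j with rfl | hl
  · exact hvj
  · obtain ⟨k, rfl⟩ := Fin.exists_succAbove_eq hl
    exact congrFun hvf k

lemma kernel_coord_left {n : ℕ} (A : Matrix (Fin (n+1)) (Fin (n+1)) ℂ) (j : Fin (n+1))
    (hM : IsUnit ((A.submatrix j.succAbove j.succAbove).det))
    (v : Fin (n+1) → ℂ) (hv : v ᵥ* A = 0) (hvj : v j = 0) : v = 0 := by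
  refine kernel_coord Aᵀ j ?_ v ?_ hvj
  · rwa [← transpose_submatrix, det_transpose]
  · rw [mulVec_transpose, hv]

lemma ker_smul_right {n : ℕ} (A : Matrix (Fin (n+1)) (Fin (n+1)) ℂ) (j : Fin (n+1))
    (hM : IsUnit ((A.submatrix j.succAbove j.succAbove).det))
    (x y : Fin (n+1) → ℂ) (hx : A.mulVec x = 0) (hy : A.mulVec y = 0) (hx0 : x ≠ 0) :
    ∃ c : ℂ, y = c • x := by
  by_cases hxj : x j = 0
  · exact absurd (kernel_coord A j hM x hx hxj) hx0
  refine ⟨y j / x j, ?_⟩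
  have hw : A.mulVec (x j • y - y j • x) = 0 := by
    have : A.mulVecLin (x j • y - y j • x) = 0 := by
      rw [map_sub, _root_.map_smul, _root_.map_smul]
      simp only [mulVecLin_apply, hx, hy, smul_zero, sub_zero]
    simpa [mulVecLin_apply] using this
  have hw0 := kernel_coord A j hM _ hw (by simp [mul_comm])
  have hxy : x j • y = y j • x := by rwa [sub_eq_zero] at hw0
  funext i
  have h := congrFun hxy i
  simp only [Pi.smul_apply, smul_eq_mul] at h ⊢
  field_simp
  linear_combination h

lemma ker_smul_left {n : ℕ} (A : Matrix (Fin (n+1)) (Fin (n+1)) ℂ) (j : Fin (n+1))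
    (hM : IsUnit ((A.submatrix j.succAbove j.succAbove).det))
    (x y : Fin (n+1) → ℂ) (hx : x ᵥ* A = 0) (hy : y ᵥ* A = 0) (hx0 : x ≠ 0) :
    ∃ c : ℂ, y = c • x := by
  refine ker_smul_right Aᵀ j ?_ x y ?_ ?_ hx0
  · rwa [← transpose_submatrix, det_transpose]
  · rw [mulVec_transpose, hx]
  · rw [mulVec_transpose, hy]
/-- For an irreducible transition-rate matrix `H` with `n = N+1` states, if `a^i_1,…,a^i_N`
are the eigenvalues of `−H_{\{i\}}` and `b_1,…,b_N` the nonzero eigenvalues of `−H`, then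
`∏_k b_k = ∑_i ∏_k a^i_k` and the stationary distribution satisfies
`π_i = ∏_k (a^i_k / b_k)`. -/
theorem stationary_distribution_eigenvalue_formula
    (N : ℕ) (H : Matrix (Fin (N + 1)) (Fin (N + 1)) ℝ)
    (hoff : ∀ i j, i ≠ j → 0 ≤ H i j)
    (hcol : ∀ j, ∑ i, H i j = 0)
    (hirr : ∀ i j : Fin (N + 1), i ≠ j → Relation.TransGen (fun a b => 0 < H b a) i j)
    (a : Fin (N + 1) → Fin N → ℂ) (b : Fin N → ℂ)
    (ha : ∀ i : Fin (N + 1),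
      (((-H).submatrix i.succAbove i.succAbove).map (Complex.ofReal ·)).charpoly
        = ∏ k, (X - C (a i k)))
    (hb : ((-H).map (Complex.ofReal ·)).charpoly = X * ∏ k, (X - C (b k)))
    (hb0 : ∀ k, b k ≠ 0) :
    (∏ k, b k) = ∑ i, ∏ k, a i k
    ∧ ∀ π : Fin (N + 1) → ℝ, (∀ i, 0 ≤ π i) → (∑ i, π i) = 1 →
        H.mulVec π = 0 → ∀ i, (π i : ℂ) = ∏ k, a i k / b k := by
  set A : Matrix (Fin (N+1)) (Fin (N+1)) ℂ := (-H).map (Complex.ofReal ·) with hA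
  -- minors' charpolys
  have hca : ∀ j : Fin (N+1),
      (A.submatrix j.succAbove j.succAbove).charpoly = ∏ k, (X - C (a j k)) := by
    intro j
    rw [hA, submatrix_map]
    exact ha j
  -- (-1)^N products
  have hneg : ∀ g : Fin N → ℂ, (∏ k, (0 - g k)) = (-1 : ℂ)^N * ∏ k, g k := by
    intro g
    have : ∀ k : Fin N, (0 - g k) = (-1) * g k := fun k => by ring
    rw [Finset.prod_congr rfl fun k _ => this k, Finset.prod_mul_distrib,
      Finset.prod_const, Finset.card_univ, Fintype.card_fin]
  have hnn : ((-1 : ℂ)^N) ≠ 0 := pow_ne_zero _ (by norm_num)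
  -- Part 1
  have h3 : (∑ j : Fin (N+1), ∏ k, (0 - a j k)) = ∏ k, (0 - b k) := by
    have h1 : derivative A.charpoly = ∑ j : Fin (N+1), ∏ k, (X - C (a j k)) := by
      rw [derivative_charpoly]
      exact Finset.sum_congr rfl fun j _ => hca j
    rw [hb, derivative_mul, derivative_X, one_mul] at h1
    have := congrArg (Polynomial.eval 0) h1
    simp only [eval_add, eval_mul, eval_X, zero_mul, add_zero, eval_finset_sum,
      eval_prod, eval_sub, eval_C] at this
    exact this.symm
  have part1 : (∏ k, b k) = ∑ i, ∏ k, a i k := by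
    have h4 : ∑ j : Fin (N+1), (-1:ℂ)^N * ∏ k, a j k = (-1:ℂ)^N * ∏ k, b k := by
      rw [← hneg]
      rw [← h3]
      exact Finset.sum_congr rfl fun j _ => (hneg _).symm
    rw [← Finset.mul_sum] at h4
    exact (mul_left_cancel₀ hnn h4).symm
  refine ⟨part1, ?_⟩
  -- Part 2
  have hS : (∏ k, b k) ≠ 0 := Finset.prod_ne_zero_iff.mpr fun k _ => hb0 k
  have hdetA : A.det = 0 := by
    rw [det_eq_sign_charpoly_coeff, hb, mul_coeff_zero, coeff_X_zero, zero_mul, mul_zero]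
  have hpow2 : ∀ j : Fin (N+1), ((-1:ℂ))^((j:ℕ)+(j:ℕ)) = 1 := by
    intro j; rw [← two_mul, pow_mul]; norm_num
  have hd : ∀ j, adjugate A j j = ∏ k, a j k := by
    intro j
    rw [adjugate_fin_succ_eq_det_submatrix, hpow2 j, one_mul, det_eq_sign_charpoly_coeff,
      hca j, Fintype.card_fin]
    have hc0 : (∏ k, (X - C (a j k))).coeff 0 = (-1:ℂ)^N * ∏ k, a j k := by
      rw [← hneg, coeff_zero_eq_eval_zero]
      simp [eval_prod]
    rw [hc0, ← mul_assoc, ← pow_add, ← two_mul, pow_mul]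
    norm_num
  have hsum_d : ∑ j, adjugate A j j = ∏ k, b k := by
    simp_rw [hd]; exact part1.symm
  obtain ⟨j₀, hj₀⟩ : ∃ j, adjugate A j j ≠ 0 := by
    by_contra h
    push_neg at h
    rw [Finset.sum_congr rfl fun j _ => h j, Finset.sum_const, smul_zero] at hsum_d
    exact hS hsum_d.symm
  have hM : IsUnit ((A.submatrix j₀.succAbove j₀.succAbove).det) := by
    have he : (A.submatrix j₀.succAbove j₀.succAbove).det = adjugate A j₀ j₀ := by
      rw [adjugate_fin_succ_eq_det_submatrix, hpow2 j₀, one_mul]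
    rw [he]
    exact hj₀.isUnit
  -- the all-ones left kernel vector
  have honeker : (fun _ : Fin (N+1) => (1:ℂ)) ᵥ* A = 0 := by
    funext j'
    have : ∑ i, H i j' = 0 := hcol j'
    simp only [vecMul, dotProduct, one_mul, hA, map_apply, neg_apply, Pi.zero_apply]
    have hre : ∑ x, -H x j' = 0 := by
      rw [Finset.sum_neg_distrib, this, neg_zero]
    exact_mod_cast hre
  have honene : (fun _ : Fin (N+1) => (1:ℂ)) ≠ 0 := by
    intro h
    simpa using congrFun h 0
  intro π hπ0 hπ1 hπker i
  set πc : Fin (N+1) → ℂ := fun i => (π i : ℂ) with hπc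
  have hπcker : A.mulVec πc = 0 := by
    funext l
    have hl : H.mulVec π l = 0 := congrFun hπker l
    simp only [mulVec, dotProduct] at hl ⊢
    simp only [hA, map_apply, neg_apply, hπc, Pi.zero_apply]
    have hre : ∑ x, -H l x * π x = 0 := by
      simp only [neg_mul]
      rw [Finset.sum_neg_distrib, hl, neg_zero]
    exact_mod_cast hre
  have hπcne : πc ≠ 0 := by
    intro h
    have hz : ∀ i, π i = 0 := fun i => by simpa [hπc] using congrFun h i
    rw [Finset.sum_congr rfl fun i _ => hz i, Finset.sum_const, smul_zero] at hπ1
    norm_num at hπ1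
  -- rows of adjugate are constant
  have hrows : ∀ i j', adjugate A i j' = adjugate A i i := by
    intro i j'
    have hrow : (fun j' => adjugate A i j') ᵥ* A = 0 := by
      funext l
      have : (adjugate A * A) i l = 0 := by rw [adjugate_mul, hdetA, zero_smul]; rfl
      simpa [vecMul, dotProduct, mul_apply] using this
    obtain ⟨c, hc⟩ := ker_smul_left A j₀ hM _ _ honeker hrow honene
    have h1 := congrFun hc j'
    have h2 := congrFun hc i
    simp only [Pi.smul_apply, smul_eq_mul, mul_one] at h1 h2
    rw [h1, h2]
  -- column 0 of adjugate is a multiple of πc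
  have hcolker : A.mulVec (fun i => adjugate A i 0) = 0 := by
    funext l
    have : (A * adjugate A) l 0 = 0 := by rw [mul_adjugate, hdetA, zero_smul]; rfl
    simpa [mulVec, dotProduct, mul_apply] using this
  obtain ⟨c, hc⟩ := ker_smul_right A j₀ hM πc _ hπcker hcolker hπcne
  -- sum both sides
  have hsumπc : ∑ i, πc i = 1 := by
    rw [hπc, ← Complex.ofReal_sum, hπ1, Complex.ofReal_one]
  have hcS : c = ∏ k, b k := by
    have := congrArg (fun v => ∑ i, v i) hc
    simp only [Pi.smul_apply, smul_eq_mul] at this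
    rw [← Finset.mul_sum, hsumπc, mul_one] at this
    rw [← this, ← hsum_d]
    exact Finset.sum_congr rfl fun i _ => hrows i 0
  have hi := congrFun hc i
  simp only [Pi.smul_apply, smul_eq_mul] at hi
  rw [hrows i 0, hd i, hcS] at hi
  rw [Finset.prod_div_distrib]
  rw [eq_div_iff hS, mul_comm]
  exact hi.symm
end

section
/- Let H be an irreducible transition-rate matrix with n = N+1 states, let a = (a_1,…,a_N) be the eigenvalues of −H_{\{1\}} and b = (b_1,…,b_N) the nonzero eigenvalues of −H. Let s = (s₁,0,…,0) and define c_k(s) by c_0 = stationary vector and c_k(s) = (kI−H)^{-1}D(s)c_{k−1}(s). Then the total mass c̄_k(s) = ∑_{i=1}^n c_{k,i}(s) equals ((a)_k/(b)_k) · s₁^k/k!, where (a)_k = ∏_{i=1}^N a_i(a_i+1)⋯(a_i+k−1). -/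
open Polynomial Matrix Finset

private lemma aux_eval_charpoly {n : ℕ} (M : Matrix (Fin n) (Fin n) ℂ) (x : ℂ) :
    M.charpoly.eval x = (x • (1 : Matrix (Fin n) (Fin n) ℂ) - M).det := by
  rw [Matrix.charpoly, ← Polynomial.coe_evalRingHom, RingHom.map_det]
  congr 1
  ext i j
  by_cases h : i = j <;>
    simp [h, Matrix.charmatrix_apply, Matrix.one_apply, Matrix.diagonal_apply]

private lemma aux_det_smul_one_add {n : ℕ} (M : Matrix (Fin n) (Fin n) ℂ) (x : ℂ) :
    (x • (1 : Matrix (Fin n) (Fin n) ℂ) + M).det = (-1 : ℂ) ^ n * M.charpoly.eval (-x) := by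
  rw [aux_eval_charpoly,
    show (-x) • (1 : Matrix (Fin n) (Fin n) ℂ) - M = -(x • 1 + M) by
      rw [neg_smul, sub_eq_add_neg, ← neg_add],
    Matrix.det_neg, Fintype.card_fin, ← mul_assoc, ← mul_pow]
  norm_num

private lemma aux_cof {n : ℕ} {R : Type*} [CommRing R] (M : Matrix (Fin (n + 1)) (Fin (n + 1)) R) :
    M.adjugate 0 0 = (M.submatrix Fin.succ Fin.succ).det := by
  rw [Matrix.adjugate_apply, Matrix.det_succ_row_zero]
  rw [Finset.sum_eq_single 0]
  · simp only [Fin.val_zero, pow_zero, one_mul, Matrix.updateRow_self, Pi.single_eq_same]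
    have : (M.updateRow 0 (Pi.single 0 1)).submatrix Fin.succ (Fin.succAbove 0)
        = M.submatrix Fin.succ Fin.succ := by
      ext i j
      simp [Matrix.submatrix_apply, Matrix.updateRow_apply, Fin.succ_ne_zero,
        Fin.succAbove_zero]
    rw [this]
  · intro j _ hj
    simp [Matrix.updateRow_self, Pi.single_eq_of_ne hj]
  · simp

private lemma aux_sum_adj {n : ℕ} {R : Type*} [CommRing R]
    (M : Matrix (Fin (n + 1)) (Fin (n + 1)) R) :
    ∑ j, M.adjugate j 0 = (M.updateRow 0 (fun _ => 1)).det := by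
  have h1 : ∀ j, M.adjugate j 0 = Matrix.cramer Mᵀ (Pi.single j 1) 0 := fun j => rfl
  simp only [h1]
  have h2 : (fun j : Fin (n + 1) => ∑ x, Pi.single x (1 : R) j) = fun _ => (1 : R) := by
    funext j
    simp [Pi.single_apply]
  have h4 := Matrix.sum_cramer_apply Mᵀ Finset.univ
    (fun (i : Fin (n + 1)) (x : Fin (n + 1)) => (Pi.single x (1 : R) : Fin (n + 1) → R) i) 0
  rw [h2] at h4
  have h3 : ∑ x, Mᵀ.cramer (Pi.single x 1) 0 = Mᵀ.cramer (fun _ => (1 : R)) 0 := h4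
  rw [h3, Matrix.cramer_apply, Matrix.updateCol_transpose, Matrix.det_transpose]

private lemma aux_cast {m : ℕ} (M : Matrix (Fin m) (Fin m) ℝ) :
    ((M.det : ℝ) : ℂ) = (M.map (Complex.ofReal ·)).det := by
  have h := RingHom.map_det Complex.ofRealHom M
  rw [RingHom.mapMatrix_apply] at h
  exact h

private lemma aux_const (N : ℕ) (H : Matrix (Fin (N + 1)) (Fin (N + 1)) ℝ)
    (hoff : ∀ i j, i ≠ j → 0 ≤ H i j) (hcol : ∀ j, ∑ i, H i j = 0)
    (hirr : ∀ i j : Fin (N + 1), i ≠ j → Relation.TransGen (fun a b => 0 < H b a) i j)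
    (u : Fin (N + 1) → ℝ) (hu : ∀ j, ∑ i, u i * H i j = 0) :
    ∀ p q : Fin (N + 1), u p = u q := by
  obtain ⟨j₀, -, hj₀⟩ := Finset.exists_max_image Finset.univ u ⟨0, Finset.mem_univ 0⟩
  have step : ∀ p, u p = u j₀ → ∀ q, 0 < H q p → u q = u j₀ := by
    intro p hp q hq
    have h1 : ∑ i, (u i - u p) * H i p = 0 := by
      have h2 := hcol p
      have h3 := hu p
      have h4 : ∑ i, (u i - u p) * H i p
          = (∑ i, u i * H i p) - u p * ∑ i, H i p := by
        rw [Finset.mul_sum, ← Finset.sum_sub_distrib]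
        exact Finset.sum_congr rfl fun i _ => by ring
      rw [h4, h2, h3]; ring
    have hnp : ∀ i ∈ Finset.univ, (u i - u p) * H i p ≤ 0 := by
      intro i _
      rcases eq_or_ne i p with rfl | hne
      · simp
      · have h5 := hj₀ i (Finset.mem_univ i)
        have h6 := hoff i p hne
        nlinarith
    have hall := (Finset.sum_eq_zero_iff_of_nonpos hnp).mp h1 q (Finset.mem_univ q)
    rcases mul_eq_zero.mp hall with h | h
    · have : u q = u p := by linarith
      rw [this, hp]
    · exact absurd h (ne_of_gt hq)
  have reach : ∀ q, Relation.TransGen (fun x y => 0 < H y x) j₀ q → u q = u j₀ := by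
    intro q h
    induction h with
    | single hrel => exact step j₀ rfl _ hrel
    | tail h₁ hrel ih => exact step _ ih _ hrel
  have main : ∀ q, u q = u j₀ := by
    intro q
    rcases eq_or_ne q j₀ with rfl | hne
    · rfl
    · exact reach q (hirr j₀ q (Ne.symm hne))
  intro p q
  rw [main p, main q]

private lemma aux_pos_det (N : ℕ) (H : Matrix (Fin (N + 1)) (Fin (N + 1)) ℝ)
    (hoff : ∀ i j, i ≠ j → 0 ≤ H i j) (hcol : ∀ j, ∑ i, H i j = 0)
    (μ : ℝ) (hμ : 0 < μ) :
    ((μ : ℂ) • (1 : Matrix (Fin (N + 1)) (Fin (N + 1)) ℂ)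
      + (-H).map (Complex.ofReal ·)).det ≠ 0 := by
  intro hdet
  obtain ⟨v, hv0, hv⟩ := Matrix.exists_vecMul_eq_zero_iff.mpr hdet
  obtain ⟨j, -, hj⟩ := Finset.exists_max_image Finset.univ (fun i => ‖v i‖)
    ⟨0, Finset.mem_univ 0⟩
  have hvj : 0 < ‖v j‖ := by
    by_contra hcon
    push_neg at hcon
    apply hv0
    funext i
    have h1 := hj i (Finset.mem_univ i)
    have h2 : ‖v i‖ = 0 := le_antisymm (le_trans h1 hcon) (by positivity)
    simpa using h2
  have hdiag : H j j ≤ 0 := by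
    have h1 := Finset.sum_erase_add Finset.univ (fun l => H l j) (Finset.mem_univ j)
    have h2 : (0:ℝ) ≤ ∑ l ∈ Finset.univ.erase j, H l j :=
      Finset.sum_nonneg fun l hl => hoff l j (Finset.ne_of_mem_erase hl)
    rw [hcol j] at h1
    linarith
  have hrow := congrFun hv j
  have hM : ∀ l, ((μ : ℂ) • (1 : Matrix (Fin (N + 1)) (Fin (N + 1)) ℂ)
      + (-H).map (Complex.ofReal ·)) l j = (if l = j then (μ:ℂ) else 0) - (H l j : ℂ) := by
    intro l
    by_cases h : l = j <;>
      simp [Matrix.one_apply, h, Matrix.map_apply, sub_eq_add_neg]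
  have hrow' : ∑ l, v l * ((if l = j then (μ:ℂ) else 0) - (H l j : ℂ)) = 0 := by
    have : (Matrix.vecMul v ((μ : ℂ) • (1 : Matrix (Fin (N + 1)) (Fin (N + 1)) ℂ)
        + (-H).map (Complex.ofReal ·))) j = ∑ l, v l * ((if l = j then (μ:ℂ) else 0) - (H l j : ℂ)) := by
      simp only [Matrix.vecMul, dotProduct]
      exact Finset.sum_congr rfl fun l _ => by rw [hM l]
    rw [← this, hrow]
    rfl
  have split : ∑ l, v l * ((if l = j then (μ:ℂ) else 0) - (H l j : ℂ))
      = ((μ : ℂ) - (H j j : ℂ)) * v j - ∑ l ∈ Finset.univ.erase j, v l * (H l j : ℂ) := by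
    have h1 : ∑ l, v l * ((if l = j then (μ:ℂ) else 0) - (H l j : ℂ))
        = (∑ l, v l * (if l = j then (μ:ℂ) else 0)) - ∑ l, v l * (H l j : ℂ) := by
      rw [← Finset.sum_sub_distrib]
      exact Finset.sum_congr rfl fun l _ => by ring
    have h2 : ∑ l, v l * (if l = j then (μ:ℂ) else 0) = (μ : ℂ) * v j := by
      rw [Finset.sum_eq_single j]
      · simp [mul_comm]
      · intro l _ hl; simp [hl]
      · simp
    have h3 : ∑ l, v l * (H l j : ℂ)
        = v j * (H j j : ℂ) + ∑ l ∈ Finset.univ.erase j, v l * (H l j : ℂ) := by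
      rw [← Finset.sum_erase_add Finset.univ _ (Finset.mem_univ j)]
      ring
    rw [h1, h2, h3]; ring
  have key : ((μ - H j j : ℝ) : ℂ) * v j = ∑ l ∈ Finset.univ.erase j, v l * (H l j : ℂ) := by
    rw [split] at hrow'
    push_cast
    linear_combination hrow'
  have habs1 : ‖((μ - H j j : ℝ) : ℂ) * v j‖ = (μ - H j j) * ‖v j‖ := by
    rw [norm_mul, Complex.norm_real, Real.norm_eq_abs, abs_of_nonneg (by linarith)]
  have habs2 : ‖∑ l ∈ Finset.univ.erase j, v l * (H l j : ℂ)‖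
      ≤ ‖v j‖ * (- H j j) := by
    refine le_trans (norm_sum_le _ _) ?_
    have h1 : ∀ l ∈ Finset.univ.erase j,
        ‖v l * (H l j : ℂ)‖ ≤ ‖v j‖ * H l j := by
      intro l hl
      rw [norm_mul, Complex.norm_real, Real.norm_eq_abs, abs_of_nonneg (hoff l j (Finset.ne_of_mem_erase hl))]
      exact mul_le_mul_of_nonneg_right (hj l (Finset.mem_univ l))
        (hoff l j (Finset.ne_of_mem_erase hl))
    refine le_trans (Finset.sum_le_sum h1) ?_
    rw [← Finset.mul_sum]
    have h2 : ∑ l ∈ Finset.univ.erase j, H l j = - H j j := by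
      have h3 := Finset.sum_erase_add Finset.univ (fun l => H l j) (Finset.mem_univ j)
      rw [hcol j] at h3
      linarith
    rw [h2]
  have final : (μ - H j j) * ‖v j‖ ≤ ‖v j‖ * (- H j j) := by
    rw [← habs1, key]
    exact habs2
  nlinarith [hvj, hμ, final]

/-- For a refractory promoter (active state `1`, here index `0`): with `a` the eigenvalues of
`−H_{\{1\}}`, `b` the nonzero eigenvalues of `−H`, `c₀` the stationary probability vector and
`c_k = (kI−H)^{-1} D(s) c_{k-1}` for `s = (s₁,0,…,0)`, the total mass satisfies
`∑_i c_{k,i} = ((a)_k/(b)_k) · s₁^k/k!` where `(a)_k` is the product of rising factorials. -/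
theorem refractory_total_mass_formula
    (N : ℕ) (H : Matrix (Fin (N + 1)) (Fin (N + 1)) ℝ)
    (hoff : ∀ i j, i ≠ j → 0 ≤ H i j)
    (hcol : ∀ j, ∑ i, H i j = 0)
    (hirr : ∀ i j : Fin (N + 1), i ≠ j → Relation.TransGen (fun a b => 0 < H b a) i j)
    (a b : Fin N → ℂ)
    (ha : (((-H).submatrix (0 : Fin (N + 1)).succAbove
        (0 : Fin (N + 1)).succAbove).map (Complex.ofReal ·)).charpoly
        = ∏ k, (X - C (a k)))
    (hb : ((-H).map (Complex.ofReal ·)).charpoly = X * ∏ k, (X - C (b k)))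
    (hb0 : ∀ k, b k ≠ 0)
    (s₁ : ℝ) (c : ℕ → Fin (N + 1) → ℝ)
    (hc0 : (∀ i, 0 ≤ c 0 i) ∧ (∑ i, c 0 i) = 1 ∧ H.mulVec (c 0) = 0)
    (hrec : ∀ k : ℕ, 1 ≤ k →
      ((k : ℝ) • (1 : Matrix (Fin (N + 1)) (Fin (N + 1)) ℝ) - H).mulVec (c k)
        = fun i => (if i = 0 then s₁ else 0) * c (k - 1) i) :
    ∀ k : ℕ, ((∑ i, c k i : ℝ) : ℂ)
      = ((∏ i, ∏ m ∈ Finset.range k, (a i + m))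
          / ∏ i, ∏ m ∈ Finset.range k, (b i + m))
        * s₁ ^ k / (Nat.factorial k) := by
  obtain ⟨hc0nn, hc0sum, hc0ker⟩ := hc0
  set Mb : Matrix (Fin (N + 1)) (Fin (N + 1)) ℂ := (-H).map (Complex.ofReal ·) with hMbdef
  set Ma : Matrix (Fin N) (Fin N) ℂ := ((-H).submatrix (0 : Fin (N + 1)).succAbove
      (0 : Fin (N + 1)).succAbove).map (Complex.ofReal ·) with hMadef
  -- determinant formulas
  have hdetb : ∀ x : ℂ, (x • (1 : Matrix (Fin (N + 1)) (Fin (N + 1)) ℂ) + Mb).det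
      = x * ∏ j, (b j + x) := by
    intro x
    rw [aux_det_smul_one_add, hb]
    simp only [eval_mul, eval_prod, eval_sub, eval_X, eval_C]
    have h1 : ∏ j, (-x - b j) = (-1 : ℂ) ^ N * ∏ j, (b j + x) :=
      calc ∏ j, (-x - b j) = ∏ j : Fin N, (-1 : ℂ) * (b j + x) :=
            Finset.prod_congr rfl fun j _ => by ring
        _ = (-1 : ℂ) ^ N * ∏ j, (b j + x) := by
            rw [Finset.prod_mul_distrib, Finset.prod_const, Finset.card_univ, Fintype.card_fin]
    rw [h1]
    have hs : (-1 : ℂ) ^ N * (-1 : ℂ) ^ N = 1 := by rw [← mul_pow]; norm_num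
    linear_combination (x * ∏ j, (b j + x)) * hs
  have hdeta : ∀ x : ℂ, (x • (1 : Matrix (Fin N) (Fin N) ℂ) + Ma).det
      = ∏ j, (a j + x) := by
    intro x
    rw [aux_det_smul_one_add, ha]
    simp only [eval_prod, eval_sub, eval_X, eval_C]
    have h1 : ∏ j, (-x - a j) = (-1 : ℂ) ^ N * ∏ j, (a j + x) :=
      calc ∏ j, (-x - a j) = ∏ j : Fin N, (-1 : ℂ) * (a j + x) :=
            Finset.prod_congr rfl fun j _ => by ring
        _ = (-1 : ℂ) ^ N * ∏ j, (a j + x) := by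
            rw [Finset.prod_mul_distrib, Finset.prod_const, Finset.card_univ, Fintype.card_fin]
    rw [h1]
    have hs : (-1 : ℂ) ^ N * (-1 : ℂ) ^ N = 1 := by rw [← mul_pow]; norm_num
    linear_combination (∏ j, (a j + x)) * hs
  -- nonvanishing of b-factors
  have hbpos : ∀ (μ : ℝ), 0 < μ → ∀ j, b j + (μ : ℂ) ≠ 0 := by
    intro μ hμ j h0
    have hd := aux_pos_det N H hoff hcol μ hμ
    rw [hdetb (μ : ℂ)] at hd
    exact hd (mul_eq_zero_of_right _ (Finset.prod_eq_zero (Finset.mem_univ j) h0))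
  -- summation identity
  have hL1 : ∀ k : ℕ, (((k + 1 : ℕ)) : ℝ) * ∑ i, c (k + 1) i = s₁ * c k 0 := by
    intro k
    have h := hrec (k + 1) (Nat.le_add_left 1 k)
    have h2 := congrArg (fun v : Fin (N + 1) → ℝ => ∑ i, v i) h
    simp only [Nat.add_sub_cancel] at h2
    have hls : ∑ i, ((((k + 1 : ℕ)) : ℝ) • (1 : Matrix (Fin (N + 1)) (Fin (N + 1)) ℝ)
        - H).mulVec (c (k + 1)) i = (((k + 1 : ℕ)) : ℝ) * ∑ i, c (k + 1) i := by
      simp only [Matrix.mulVec, dotProduct, Matrix.sub_apply, Matrix.smul_apply,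
        Matrix.one_apply, smul_eq_mul]
      rw [Finset.sum_comm, Finset.mul_sum]
      refine Finset.sum_congr rfl fun j _ => ?_
      rw [← Finset.sum_mul]
      congr 1
      rw [Finset.sum_sub_distrib, hcol j]
      simp [mul_ite]
    have hrs : ∑ i, (if i = (0 : Fin (N + 1)) then s₁ else 0) * c k i = s₁ * c k 0 := by
      rw [Finset.sum_eq_single 0]
      · simp
      · intro l _ hl; simp [hl]
      · simp
    rw [hls, hrs] at h2
    exact h2
  -- Cramer step identity
  have hstep : ∀ k : ℕ, (((k + 1 : ℕ)) : ℂ) * (∏ j, (b j + ((k + 1 : ℕ) : ℂ)))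
        * ((c (k + 1) 0 : ℝ) : ℂ)
      = (∏ j, (a j + ((k + 1 : ℕ) : ℂ))) * ((s₁ : ℂ) * ((c k 0 : ℝ) : ℂ)) := by
    intro k
    set Ak : Matrix (Fin (N + 1)) (Fin (N + 1)) ℝ :=
      (((k + 1 : ℕ)) : ℝ) • 1 - H with hAk
    have h := hrec (k + 1) (Nat.le_add_left 1 k)
    simp only [Nat.add_sub_cancel] at h
    have h2 : Ak.det * c (k + 1) 0 = Ak.adjugate 0 0 * (s₁ * c k 0) := by
      have h3 := congrArg (fun v => Ak.adjugate.mulVec v) h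
      rw [Matrix.mulVec_mulVec, Matrix.adjugate_mul] at h3
      have h4 := congrFun h3 0
      rw [Matrix.smul_mulVec, Matrix.one_mulVec] at h4
      have h5 : (Ak.adjugate.mulVec fun i => (if i = (0 : Fin (N + 1)) then s₁ else 0) * c k i) 0
          = Ak.adjugate 0 0 * (s₁ * c k 0) := by
        simp only [Matrix.mulVec, dotProduct]
        rw [Finset.sum_eq_single 0]
        · simp
        · intro l _ hl; simp [hl]
        · simp
      rw [h5] at h4
      simpa using h4
    have hdet1 : ((Ak.det : ℝ) : ℂ) = (((k + 1 : ℕ)) : ℂ) * ∏ j, (b j + ((k + 1 : ℕ) : ℂ)) := by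
      rw [aux_cast]
      have hmm : Ak.map (Complex.ofReal ·)
          = (((k + 1 : ℕ)) : ℂ) • (1 : Matrix (Fin (N + 1)) (Fin (N + 1)) ℂ) + Mb := by
        ext i j
        by_cases hij : i = j <;>
          simp [hAk, hij, Matrix.map_apply, Matrix.one_apply, hMbdef, sub_eq_add_neg]
      rw [hmm, hdetb]
    have hadj1 : ((Ak.adjugate 0 0 : ℝ) : ℂ) = ∏ j, (a j + ((k + 1 : ℕ) : ℂ)) := by
      rw [aux_cof, aux_cast]
      have hmm : (Ak.submatrix Fin.succ Fin.succ).map (Complex.ofReal ·)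
          = (((k + 1 : ℕ)) : ℂ) • (1 : Matrix (Fin N) (Fin N) ℂ) + Ma := by
        ext i j
        by_cases hij : i = j <;>
          simp [hAk, hij, Matrix.map_apply, Matrix.one_apply, hMadef, Fin.succAbove_zero,
            Matrix.submatrix_apply, Fin.succ_inj, sub_eq_add_neg]
      rw [hmm, hdeta]
    have h6 := congrArg (fun r : ℝ => (r : ℂ)) h2
    simp only [Complex.ofReal_mul] at h6
    rw [hdet1, hadj1] at h6
    linear_combination h6
  -- stationary part
  have hdetA0 : (-H).det = 0 := by
    have h := hdetb 0
    simp only [zero_smul, zero_add, zero_mul] at h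
    have h2 := aux_cast (-H)
    rw [h] at h2
    exact_mod_cast h2
  set r : Fin (N + 1) → ℝ := fun i => (-H).adjugate i 0 with hrdef
  have hrker : (-H).mulVec r = 0 := by
    funext i
    have h' : ∑ l, (-H) i l * (-H).adjugate l 0 = 0 := by
      rw [← Matrix.mul_apply, Matrix.mul_adjugate, hdetA0]
      simp
    simpa [Matrix.mulVec, dotProduct, hrdef] using h'
  have hones : (-H)ᵀ.mulVec (fun _ => (1 : ℝ)) = 0 := by
    funext j
    have h := hcol j
    simp only [Matrix.mulVec, dotProduct, Matrix.transpose_apply, Matrix.neg_apply,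
      mul_one, Pi.zero_apply]
    rw [Finset.sum_neg_distrib, h, neg_zero]
  have hub : ∀ u : Fin (N + 1) → ℝ, u ∈ LinearMap.ker ((-H)ᵀ.mulVecLin) → ∃ t : ℝ, u = fun _ => t := by
    intro u hu
    have hu0 := LinearMap.mem_ker.mp hu
    rw [Matrix.mulVecLin_apply] at hu0
    have hu' : ∀ j, ∑ i, u i * H i j = 0 := by
      intro j
      have h := congrFun hu0 j
      simp only [Matrix.mulVec, dotProduct, Matrix.transpose_apply, Matrix.neg_apply,
        Pi.zero_apply] at h
      have h2 : ∑ i, u i * H i j = -∑ i, -H i j * u i := by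
        rw [← Finset.sum_neg_distrib]
        exact Finset.sum_congr rfl fun i _ => by ring
      rw [h2, h, neg_zero]
    exact ⟨u 0, funext fun p => aux_const N H hoff hcol hirr u hu' p 0⟩
  have hkerT : LinearMap.ker ((-H)ᵀ.mulVecLin) = Submodule.span ℝ {fun _ => (1 : ℝ)} := by
    apply le_antisymm
    · intro u hu
      obtain ⟨t, rfl⟩ := hub u hu
      exact Submodule.mem_span_singleton.mpr ⟨t, by funext i; simp⟩
    · rw [Submodule.span_le, Set.singleton_subset_iff]
      exact LinearMap.mem_ker.mpr (by rw [Matrix.mulVecLin_apply]; exact hones)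
  have hone_ne : (fun _ => (1 : ℝ)) ≠ (0 : Fin (N + 1) → ℝ) := by
    intro h
    have := congrFun h 0
    simp at this
  have hfinT : Module.finrank ℝ (LinearMap.ker ((-H)ᵀ.mulVecLin)) = 1 := by
    rw [hkerT]
    exact finrank_span_singleton hone_ne
  have hrk1 := LinearMap.finrank_range_add_finrank_ker ((-H)ᵀ.mulVecLin)
  have hrk2 := LinearMap.finrank_range_add_finrank_ker ((-H).mulVecLin)
  have htr : Matrix.rank ((-H)ᵀ) = Matrix.rank (-H) := Matrix.rank_transpose (-H)
  have hrkdef1 : Matrix.rank ((-H)ᵀ)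
      = Module.finrank ℝ (LinearMap.range ((-H)ᵀ.mulVecLin)) := rfl
  have hrkdef2 : Matrix.rank (-H)
      = Module.finrank ℝ (LinearMap.range ((-H).mulVecLin)) := rfl
  have hdom : Module.finrank ℝ (Fin (N + 1) → ℝ) = N + 1 := by
    rw [Module.finrank_fintype_fun_eq_card, Fintype.card_fin]
  rw [hdom] at hrk1 hrk2
  rw [← hrkdef1] at hrk1
  rw [← hrkdef2] at hrk2
  have hker1 : Module.finrank ℝ (LinearMap.ker ((-H).mulVecLin)) = 1 := by omega
  have hc0mem : c 0 ∈ LinearMap.ker ((-H).mulVecLin) := by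
    rw [LinearMap.mem_ker, Matrix.mulVecLin_apply, Matrix.neg_mulVec, hc0ker, neg_zero]
  have hrmem : r ∈ LinearMap.ker ((-H).mulVecLin) := by
    rw [LinearMap.mem_ker, Matrix.mulVecLin_apply]
    exact hrker
  have hc0ne : (⟨c 0, hc0mem⟩ : LinearMap.ker ((-H).mulVecLin)) ≠ 0 := by
    intro h
    have h2 : c 0 = 0 := congrArg Subtype.val h
    rw [h2] at hc0sum
    simp at hc0sum
  obtain ⟨t, ht⟩ := (finrank_eq_one_iff_of_nonzero'
    (⟨c 0, hc0mem⟩ : LinearMap.ker ((-H).mulVecLin)) hc0ne).mp hker1 ⟨r, hrmem⟩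
  have htr' : t • c 0 = r := congrArg Subtype.val ht
  -- value of r at 0 and total of r
  have hr0C : ((r 0 : ℝ) : ℂ) = ∏ i, a i := by
    have h1 : r 0 = ((-H).submatrix Fin.succ Fin.succ).det := aux_cof (-H)
    rw [h1, aux_cast]
    have h2 : ((-H).submatrix Fin.succ Fin.succ).map (Complex.ofReal ·)
        = (0 : ℂ) • (1 : Matrix (Fin N) (Fin N) ℂ) + Ma := by
      ext i j
      simp [hMadef, Fin.succAbove_zero, Matrix.map_apply, Matrix.submatrix_apply]
    rw [h2, hdeta 0]
    simp
  -- polynomial argument for the updateRow determinant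
  have hrowdet : ∀ x : ℂ, (x • (1 : Matrix (Fin (N + 1)) (Fin (N + 1)) ℂ) + Mb).det
      = x * ((x • (1 : Matrix (Fin (N + 1)) (Fin (N + 1)) ℂ) + Mb).updateRow 0
          (fun _ => 1)).det := by
    intro x
    set M' : Matrix (Fin (N + 1)) (Fin (N + 1)) ℂ :=
      x • (1 : Matrix (Fin (N + 1)) (Fin (N + 1)) ℂ) + Mb with hM'
    have hsum : ∑ l, M' l = fun _ => x := by
      funext j
      rw [show (∑ l, M' l) j = ∑ l, M' l j from Finset.sum_apply j Finset.univ (fun l => M' l)]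
      have he : ∀ l, M' l j = x * (if l = j then 1 else 0) + -(H l j : ℂ) := by
        intro l
        by_cases h : l = j <;> simp [hM', h, Matrix.one_apply, hMbdef, Matrix.map_apply]
      rw [Finset.sum_congr rfl fun l _ => he l, Finset.sum_add_distrib]
      have h1 : ∑ l : Fin (N + 1), x * (if l = j then (1:ℂ) else 0) = x := by
        rw [Finset.sum_eq_single j]
        · simp
        · intro l _ hl; simp [hl]
        · simp
      have h2 : ∑ l : Fin (N + 1), -(H l j : ℂ) = 0 := by
        rw [Finset.sum_neg_distrib]
        have := hcol j
        push_cast [← Complex.ofReal_sum]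
        simp [this]
      rw [h1, h2, add_zero]
    have h1 := Matrix.det_updateRow_sum M' 0 (fun _ => (1 : ℂ))
    simp only [one_smul] at h1
    rw [hsum] at h1
    have h2 : (fun _ : Fin (N + 1) => x) = x • (fun _ => (1 : ℂ)) := by
      funext i; simp
    rw [h2, Matrix.det_updateRow_smul] at h1
    exact h1.symm
  have hdetBMb : (Mb.updateRow 0 (fun _ => (1 : ℂ))).det = ∏ j, b j := by
    set pP : Polynomial ℂ := ((Matrix.of fun i j =>
        (if i = j then (X : ℂ[X]) else 0) + C (Mb i j)).updateRow 0
        (fun _ => (1 : ℂ[X]))).det with hpP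
    have hpeval : ∀ x : ℂ, pP.eval x
        = ((x • (1 : Matrix (Fin (N + 1)) (Fin (N + 1)) ℂ) + Mb).updateRow 0
            (fun _ => 1)).det := by
      intro x
      rw [hpP, ← Polynomial.coe_evalRingHom, RingHom.map_det]
      congr 1
      ext i j
      rcases eq_or_ne i 0 with rfl | h
      · simp
      · simp only [RingHom.mapMatrix_apply, Matrix.map_apply]
        rw [Matrix.updateRow_ne h, Matrix.updateRow_ne h]
        by_cases hij : i = j <;> simp [hij, Matrix.one_apply]
    set qP : Polynomial ℂ := ∏ j, ((X : ℂ[X]) + C (b j)) with hqP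
    have hqeval : ∀ x : ℂ, qP.eval x = ∏ j, (b j + x) := by
      intro x
      rw [hqP]
      simp only [eval_prod, eval_add, eval_X, eval_C]
      exact Finset.prod_congr rfl fun j _ => add_comm _ _
    have hpq : pP = qP := by
      apply Polynomial.eq_of_infinite_eval_eq
      apply Set.Infinite.mono ?_ ((Set.finite_singleton (0 : ℂ)).infinite_compl)
      intro x hx
      simp only [Set.mem_compl_iff, Set.mem_singleton_iff] at hx
      simp only [Set.mem_setOf_eq]
      rw [hpeval, hqeval]
      have h := hrowdet x
      rw [hdetb x] at h
      exact (mul_left_cancel₀ hx h).symm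
    have h := hpeval 0
    rw [hpq, hqeval 0] at h
    simp only [zero_smul, zero_add, add_zero] at h
    exact h.symm
  have hrsC : ((∑ i, r i : ℝ) : ℂ) = ∏ i, b i := by
    have h1 : ∑ i, r i = ((-H).updateRow 0 (fun _ => (1 : ℝ))).det := aux_sum_adj (-H)
    rw [h1, aux_cast]
    have h2 : ((-H).updateRow 0 (fun _ => (1 : ℝ))).map (Complex.ofReal ·)
        = Mb.updateRow 0 (fun _ => (1 : ℂ)) := by
      ext i j
      rcases eq_or_ne i 0 with rfl | h
      · simp [Matrix.map_apply]
      · rw [Matrix.map_apply, Matrix.updateRow_ne h, Matrix.updateRow_ne h]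
        simp [hMbdef, Matrix.map_apply]
    rw [h2, hdetBMb]
  -- stationary identity
  have hG0 : ((c 0 0 : ℝ) : ℂ) * ∏ i, b i = ∏ i, a i := by
    have e1 : r 0 = t * c 0 0 := by rw [← htr']; simp
    have e2 : (∑ i, r i) = t := by
      rw [← htr']
      have : ∑ i, (t • c 0) i = t * ∑ i, c 0 i := by
        rw [Finset.mul_sum]
        exact Finset.sum_congr rfl fun i _ => by simp
      rw [this, hc0sum, mul_one]
    have e3 : ((t : ℝ) : ℂ) * ((c 0 0 : ℝ) : ℂ) = ∏ i, a i := by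
      rw [← hr0C, e1]
      push_cast
      ring
    have e4 : ((t : ℝ) : ℂ) = ∏ i, b i := by
      rw [e2] at hrsC
      exact hrsC
    rw [← e4]
    linear_combination e3
  -- main induction
  have G : ∀ k : ℕ, ((c k 0 : ℝ) : ℂ)
      * ((∏ i, ∏ m ∈ Finset.range k, (b i + ((m + 1 : ℕ) : ℂ)))
        * ((Nat.factorial k : ℕ) : ℂ) * ∏ i, b i)
      = (s₁ : ℂ) ^ k * ((∏ i, ∏ m ∈ Finset.range k, (a i + ((m + 1 : ℕ) : ℂ))) * ∏ i, a i) := by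
    intro k
    induction k with
    | zero => simpa using hG0
    | succ k ih =>
      have e1 := hstep k
      have hbsplit : ∏ i, ∏ m ∈ Finset.range (k + 1), (b i + ((m + 1 : ℕ) : ℂ))
          = (∏ i, ∏ m ∈ Finset.range k, (b i + ((m + 1 : ℕ) : ℂ)))
            * ∏ i, (b i + ((k + 1 : ℕ) : ℂ)) := by
        rw [← Finset.prod_mul_distrib]
        exact Finset.prod_congr rfl fun i _ => Finset.prod_range_succ _ k
      have hasplit : ∏ i, ∏ m ∈ Finset.range (k + 1), (a i + ((m + 1 : ℕ) : ℂ))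
          = (∏ i, ∏ m ∈ Finset.range k, (a i + ((m + 1 : ℕ) : ℂ)))
            * ∏ i, (a i + ((k + 1 : ℕ) : ℂ)) := by
        rw [← Finset.prod_mul_distrib]
        exact Finset.prod_congr rfl fun i _ => Finset.prod_range_succ _ k
      rw [hbsplit, hasplit, Nat.factorial_succ]
      push_cast at e1 ih ⊢
      linear_combination ((∏ i, ∏ m ∈ Finset.range k, (b i + ((m : ℂ) + 1)))
          * ((Nat.factorial k : ℕ) : ℂ) * ∏ i, b i) * e1
        + ((s₁ : ℂ) * ∏ i, (a i + ((k : ℂ) + 1))) * ih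
  -- conclusion
  intro k
  cases k with
  | zero => simp [hc0sum]
  | succ k =>
    have hLC : (((k + 1 : ℕ)) : ℂ) * ((∑ i, c (k + 1) i : ℝ) : ℂ)
        = (s₁ : ℂ) * ((c k 0 : ℝ) : ℂ) := by
      have h := hL1 k
      have h2 := congrArg (fun r : ℝ => (r : ℂ)) h
      push_cast at h2 ⊢
      linear_combination h2
    have ihG := G k
    have hPb : (∏ i, ∏ m ∈ Finset.range (k + 1), (b i + (m : ℂ))) ≠ 0 := by
      rw [Finset.prod_ne_zero_iff]
      intro i _
      rw [Finset.prod_ne_zero_iff]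
      intro m _
      rcases Nat.eq_zero_or_pos m with rfl | hm
      · simpa using hb0 i
      · have h := hbpos m (by exact_mod_cast hm) i
        push_cast at h ⊢
        exact h
    have hasplit2 : ∏ i, ∏ m ∈ Finset.range (k + 1), (a i + (m : ℂ))
        = (∏ i, ∏ m ∈ Finset.range k, (a i + ((m + 1 : ℕ) : ℂ))) * ∏ i, a i := by
      rw [← Finset.prod_mul_distrib]
      refine Finset.prod_congr rfl fun i _ => ?_
      rw [Finset.prod_range_succ']
      simp
    have hbsplit2 : ∏ i, ∏ m ∈ Finset.range (k + 1), (b i + (m : ℂ))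
        = (∏ i, ∏ m ∈ Finset.range k, (b i + ((m + 1 : ℕ) : ℂ))) * ∏ i, b i := by
      rw [← Finset.prod_mul_distrib]
      refine Finset.prod_congr rfl fun i _ => ?_
      rw [Finset.prod_range_succ']
      simp
    have hfacne : (((Nat.factorial (k + 1) : ℕ)) : ℂ) ≠ 0 :=
      Nat.cast_ne_zero.mpr (Nat.factorial_ne_zero _)
    rw [div_mul_eq_mul_div, div_div, eq_div_iff (mul_ne_zero hPb hfacne)]
    rw [hasplit2, hbsplit2, Nat.factorial_succ]
    push_cast at hLC ihG ⊢
    linear_combination ((∏ i, ∏ m ∈ Finset.range k, (b i + ((m : ℂ) + 1))) * (∏ i, b i)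
        * ((Nat.factorial k : ℕ) : ℂ)) * hLC
      + (s₁ : ℂ) * ihG
end

section
/- Let X be a random variable with values in [0,1] whose moments are E[X^k] = (a)_k/(b)_k where a,b ∈ ℂ^N have all entries with positive real parts and the moment sequence is real. If ν > 0 and M is a random variable with M | X ∼ Poisson(νX), then P(M = k) = (ν^k/k!) · ((a)_k/(b)_k) · ∑_{j=0}^∞ ((a+k)_j/(b+k)_j) · (−ν)^j / j!, i.e., P(M=k) = (ν^k/k!)((a)_k/(b)_k) · ₙFₙ[(a+k);(b+k);−ν]. -/
open MeasureTheory

/-- If `X ∈ [0,1]` has (real-valued) moments `E[X^k] = (a)_k/(b)_k` for complex parameter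
vectors `a, b` with positive real parts, and `M | X ∼ Poisson(νX)` with `ν > 0`, then
`P(M=k) = (ν^k/k!)·((a)_k/(b)_k)·ₙFₙ[(a+k);(b+k);−ν]`, the hypergeometric value being the
series `∑_j ((a+k)_j/(b+k)_j)(−ν)^j/j!`. -/
theorem refractory_mRNA_distribution
    (N : ℕ) (a b : Fin N → ℂ)
    (hre : ∀ i, 0 < (a i).re ∧ 0 < (b i).re)
    {Ω : Type*} [MeasurableSpace Ω] (ℙ : Measure Ω) [IsProbabilityMeasure ℙ]
    (X : Ω → ℝ) (hXm : Measurable X) (hX01 : ∀ ω, X ω ∈ Set.Icc (0 : ℝ) 1)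
    (hmom : ∀ k : ℕ, ((∫ ω, X ω ^ k ∂ℙ : ℝ) : ℂ)
      = (∏ i, ∏ m ∈ Finset.range k, (a i + m))
        / ∏ i, ∏ m ∈ Finset.range k, (b i + m))
    (ν : ℝ) (hν : 0 < ν) (M : Ω → ℕ) (hMm : Measurable M)
    (hcond : ∀ (k : ℕ) (A : Set ℝ), MeasurableSet A →
      (ℙ {ω | M ω = k ∧ X ω ∈ A}).toReal
        = ∫ ω in {ω | X ω ∈ A},
            (ν * X ω) ^ k * Real.exp (-(ν * X ω)) / (Nat.factorial k) ∂ℙ) :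
    ∀ k : ℕ, ((ℙ {ω | M ω = k}).toReal : ℂ)
      = (ν : ℂ) ^ k / (Nat.factorial k)
        * ((∏ i, ∏ m ∈ Finset.range k, (a i + m))
            / ∏ i, ∏ m ∈ Finset.range k, (b i + m))
        * ∑' j : ℕ,
            ((∏ i, ∏ m ∈ Finset.range j, (a i + k + m))
              / ∏ i, ∏ m ∈ Finset.range j, (b i + k + m))
            * (-(ν : ℂ)) ^ j / (Nat.factorial j) := by

  intro k
  have hX0 : ∀ ω, 0 ≤ X ω := fun ω => (hX01 ω).1
  have hX1 : ∀ ω, X ω ≤ 1 := fun ω => (hX01 ω).2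
  set c : ℕ → ℝ := fun j => ν ^ k * (-ν) ^ j / (k.factorial * j.factorial) with hc
  have hXabs : ∀ (ω) (n : ℕ), |X ω ^ n| ≤ 1 := by
    intro ω n
    rw [abs_pow]
    exact pow_le_one₀ (abs_nonneg _) (abs_le.2 ⟨by linarith [hX0 ω], hX1 ω⟩)
  -- integrability of monomials
  have hint : ∀ n : ℕ, Integrable (fun ω => X ω ^ n) ℙ := by
    intro n
    refine Integrable.mono' (integrable_const (1 : ℝ))
      ((hXm.pow_const n).aestronglyMeasurable) (ae_of_all _ fun ω => ?_)
    simpa [Real.norm_eq_abs] using hXabs ω n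
  have hintc : ∀ j : ℕ, Integrable (fun ω => c j * X ω ^ (k + j)) ℙ :=
    fun j => (hint (k + j)).const_mul _
  have hcabs : ∀ j, |c j| = ν ^ k * ν ^ j / (k.factorial * j.factorial) := by
    intro j
    have h1 : (0:ℝ) < (k.factorial : ℝ) * j.factorial := by positivity
    rw [hc, abs_div, abs_mul, abs_pow, abs_pow, abs_neg, abs_of_pos hν,
      abs_of_pos h1]
  -- P(M=k) as an integral
  have hPk : (ℙ {ω | M ω = k}).toReal
      = ∫ ω, (ν * X ω) ^ k * Real.exp (-(ν * X ω)) / k.factorial ∂ℙ := by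
    have := hcond k Set.univ MeasurableSet.univ
    simpa using this
  -- pointwise series expansion
  have hpt : ∀ ω, (ν * X ω) ^ k * Real.exp (-(ν * X ω)) / k.factorial
      = ∑' j, c j * X ω ^ (k + j) := by
    intro ω
    have hexp : Real.exp (-(ν * X ω))
        = ∑' j : ℕ, (-(ν * X ω)) ^ j / j.factorial := by
      rw [Real.exp_eq_exp_ℝ, NormedSpace.exp_eq_tsum_div]
    have : ∀ j : ℕ, c j * X ω ^ (k + j)
        = (ν * X ω) ^ k / k.factorial * ((-(ν * X ω)) ^ j / j.factorial) := by
      intro j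
      rw [hc, pow_add]
      ring
    rw [tsum_congr this, tsum_mul_left, hexp]
    ring
  -- summability of the integral norms
  have hsum : Summable fun j => ∫ ω, ‖c j * X ω ^ (k + j)‖ ∂ℙ := by
    have hb : Summable fun j : ℕ => ν ^ k * ν ^ j / (k.factorial * j.factorial) := by
      have := (Real.summable_pow_div_factorial ν).mul_left (ν ^ k / k.factorial)
      refine this.congr fun j => ?_
      field_simp
    refine Summable.of_nonneg_of_le (fun j => ?_) (fun j => ?_) hb
    · exact integral_nonneg fun ω => norm_nonneg _
    · calc ∫ ω, ‖c j * X ω ^ (k + j)‖ ∂ℙ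
          ≤ ∫ _ω, |c j| ∂ℙ := by
            refine integral_mono (hintc j).norm (integrable_const _) fun ω => ?_
            rw [Real.norm_eq_abs, abs_mul]
            calc |c j| * |X ω ^ (k + j)| ≤ |c j| * 1 :=
                  mul_le_mul_of_nonneg_left (hXabs ω (k + j)) (abs_nonneg _)
              _ = |c j| := mul_one _
      _ = |c j| := by simp
      _ = ν ^ k * ν ^ j / (k.factorial * j.factorial) := hcabs j
  -- swap integral and sum
  have hswap : (ℙ {ω | M ω = k}).toReal
      = ∑' j, c j * ∫ ω, X ω ^ (k + j) ∂ℙ := by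
    rw [hPk]
    have := integral_tsum_of_summable_integral_norm hintc hsum
    rw [show (fun ω => (ν * X ω) ^ k * Real.exp (-(ν * X ω)) / ↑k.factorial)
        = fun ω => ∑' j, c j * X ω ^ (k + j) from funext hpt, ← this]
    exact tsum_congr fun j => integral_const_mul _ _
  -- nonvanishing of Pochhammer factors
  have hbne : ∀ n : ℕ, (∏ i, ∏ m ∈ Finset.range n, (b i + m)) ≠ 0 := by
    intro n
    refine Finset.prod_ne_zero_iff.2 fun i _ => Finset.prod_ne_zero_iff.2 fun m _ => ?_
    intro h
    have : (b i + (m : ℂ)).re = 0 := by rw [h]; simp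
    simp only [Complex.add_re, Complex.natCast_re] at this
    have hm : (0:ℝ) ≤ (m:ℝ) := Nat.cast_nonneg m
    linarith [(hre i).2]
  -- splitting of Pochhammer products
  have hsplitA : ∀ j, (∏ i, ∏ m ∈ Finset.range (k + j), (a i + m))
      = (∏ i, ∏ m ∈ Finset.range k, (a i + m))
        * (∏ i, ∏ m ∈ Finset.range j, (a i + k + m)) := by
    intro j
    rw [← Finset.prod_mul_distrib]
    refine Finset.prod_congr rfl fun i _ => ?_
    rw [Finset.prod_range_add]
    congr 1
    refine Finset.prod_congr rfl fun m _ => ?_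
    push_cast
    ring
  have hsplitB : ∀ j, (∏ i, ∏ m ∈ Finset.range (k + j), (b i + m))
      = (∏ i, ∏ m ∈ Finset.range k, (b i + m))
        * (∏ i, ∏ m ∈ Finset.range j, (b i + k + m)) := by
    intro j
    rw [← Finset.prod_mul_distrib]
    refine Finset.prod_congr rfl fun i _ => ?_
    rw [Finset.prod_range_add]
    congr 1
    refine Finset.prod_congr rfl fun m _ => ?_
    push_cast
    ring
  -- now compute in ℂ
  rw [hswap, Complex.ofReal_tsum]
  have hterm : ∀ j : ℕ, ((c j * ∫ ω, X ω ^ (k + j) ∂ℙ : ℝ) : ℂ)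
      = ((ν : ℂ) ^ k / (Nat.factorial k)
          * ((∏ i, ∏ m ∈ Finset.range k, (a i + m))
              / ∏ i, ∏ m ∈ Finset.range k, (b i + m)))
        * (((∏ i, ∏ m ∈ Finset.range j, (a i + k + m))
              / ∏ i, ∏ m ∈ Finset.range j, (b i + k + m))
            * (-(ν : ℂ)) ^ j / (Nat.factorial j)) := by
    intro j
    rw [Complex.ofReal_mul, hmom (k + j), hsplitA j, hsplitB j, hc]
    push_cast
    rw [mul_div_mul_comm]
    ring
  rw [tsum_congr hterm, tsum_mul_left]
end
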